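/- arXiv:1805.03405 — 7 statements merged into one kernel-verified Lean document; each statement's English description precedes it below -/
import Mathlib

section
/- For every finite simple graph G, the following statements are equivalent: (1) G is a threshold graph; (2) the clique hypergraph C(G) is 1-Sperner; (3) the clique hypergraph C(G) is a threshold hypergraph; (4) the clique hypergraph C(G) is 2-asummable. -/
open Finset

open scoped Classical

/-- A hypergraph (given by its set of hyperedges, each a finite set of vertices)
is 1-Sperner if every two distinct hyperedges `e` and `f` satisfy
`min |e \ f| |f \ e| = 1`. -/
def OneSperner {V : Type*} [DecidableEq V] (E : Set (Finset V)) : Prop :=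
  ∀ e ∈ E, ∀ f ∈ E, e ≠ f → min (e \ f).card (f \ e).card = 1

/-- A set of vertices `X` is dependent in the hypergraph with hyperedge set `E`
if it contains some hyperedge; it is independent otherwise. -/
def HypDep {V : Type*} (E : Set (Finset V)) (X : Finset V) : Prop :=
  ∃ e ∈ E, e ⊆ X

/-- A hypergraph is threshold if there are nonnegative integer vertex weights and a
threshold such that a vertex set has weight at least the threshold iff it contains
a hyperedge. -/
def HypThreshold {V : Type*} [Fintype V] (E : Set (Finset V)) : Prop :=
  ∃ (w : V → ℕ) (t : ℕ), ∀ X : Finset V, (t ≤ ∑ x ∈ X, w x) ↔ HypDep E X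

/-- The characteristic vector of a finite vertex set. -/
def chiVec {V : Type*} [DecidableEq V] (X : Finset V) : V → ℕ :=
  fun v => if v ∈ X then 1 else 0

/-- A hypergraph is 2-asummable if there are no two independent sets `A₁, A₂`
and two dependent sets `B₁, B₂` with `χ^{A₁} + χ^{A₂} = χ^{B₁} + χ^{B₂}`. -/
def TwoAsummable {V : Type*} [DecidableEq V] (E : Set (Finset V)) : Prop :=
  ¬ ∃ A₁ A₂ B₁ B₂ : Finset V,
      ¬ HypDep E A₁ ∧ ¬ HypDep E A₂ ∧ HypDep E B₁ ∧ HypDep E B₂ ∧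
      ∀ v, chiVec A₁ v + chiVec A₂ v = chiVec B₁ v + chiVec B₂ v

/-- A graph is threshold if there are nonnegative integer vertex weights and a threshold
such that a vertex set has weight at most the threshold iff it is an independent set. -/
def ThresholdGraph {V : Type*} [Fintype V] (G : SimpleGraph V) : Prop :=
  ∃ (w : V → ℕ) (t : ℕ), ∀ X : Finset V,
    ((∑ x ∈ X, w x) ≤ t ↔ ∀ u ∈ X, ∀ v ∈ X, ¬ G.Adj u v)

/-- A vertex cover of a graph: every edge has an endpoint in the set. -/
def IsVertexCover {V : Type*} (G : SimpleGraph V) (S : Finset V) : Prop :=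
  ∀ u v : V, G.Adj u v → u ∈ S ∨ v ∈ S

/-- The vertex cover hypergraph: hyperedges are the inclusion-minimal vertex covers. -/
def VCHyp {V : Type*} (G : SimpleGraph V) : Set (Finset V) :=
  {S | IsVertexCover G S ∧ ∀ T : Finset V, IsVertexCover G T → T ⊆ S → T = S}

/-- The clique hypergraph: hyperedges are the inclusion-maximal cliques. -/
def CliqueHyp {V : Type*} (G : SimpleGraph V) : Set (Finset V) :=
  {S | G.IsClique (S : Set V) ∧ ∀ T : Finset V, G.IsClique (T : Set V) → S ⊆ T → T = S}

/-- The closed neighborhood `N[v]` of a vertex, as a finite set. -/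
def closedNbhd {V : Type*} [Fintype V] [DecidableEq V] (G : SimpleGraph V)
    [DecidableRel G.Adj] (v : V) : Finset V :=
  insert v (G.neighborFinset v)

/-- The closed neighborhood hypergraph: hyperedges are the inclusion-minimal sets of
the form `N[v]`. -/
def NHyp {V : Type*} [Fintype V] [DecidableEq V] (G : SimpleGraph V)
    [DecidableRel G.Adj] : Set (Finset V) :=
  {S | (∃ v : V, S = closedNbhd G v) ∧
       ∀ v : V, closedNbhd G v ⊆ S → closedNbhd G v = S}

/-- A dominating set: every vertex is in the set or has a neighbor in it. -/
def IsDomSet {V : Type*} (G : SimpleGraph V) (D : Finset V) : Prop :=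
  ∀ v : V, v ∈ D ∨ ∃ u ∈ D, G.Adj u v

/-- The dominating set hypergraph: hyperedges are the inclusion-minimal dominating sets. -/
def DomHyp {V : Type*} (G : SimpleGraph V) : Set (Finset V) :=
  {D | IsDomSet G D ∧ ∀ T : Finset V, IsDomSet G T → T ⊆ D → T = D}

/-- A graph is domishold if there are nonnegative integer vertex weights and a threshold
such that a vertex set has weight at least the threshold iff it is a dominating set. -/
def Domishold {V : Type*} [Fintype V] (G : SimpleGraph V) : Prop :=
  ∃ (w : V → ℕ) (t : ℕ), ∀ X : Finset V, (t ≤ ∑ x ∈ X, w x) ↔ IsDomSet G X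

/-- `(K, I)` is a split partition of `G`: `K` is a clique, `I` an independent set,
they are disjoint and cover all vertices. -/
def IsSplitPartition {V : Type*} [Fintype V] (G : SimpleGraph V) (K I : Finset V) : Prop :=
  Disjoint K I ∧ K ∪ I = Finset.univ ∧ G.IsClique (K : Set V) ∧
    ∀ u ∈ I, ∀ v ∈ I, ¬ G.Adj u v

/-- The labeled split graph `(G, K, I)` is clique-Sperner: for `u, v ∈ K`,
`N(u) ∩ I ⊆ N(v) ∩ I` implies `u = v`. -/
def CliqueSperner {V : Type*} (G : SimpleGraph V) (K I : Finset V) : Prop :=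
  ∀ u ∈ K, ∀ v ∈ K,
    G.neighborSet u ∩ (I : Set V) ⊆ G.neighborSet v ∩ (I : Set V) → u = v

/-- The labeled split graph `(G, K, I)` is independent-Sperner: for `u, v ∈ I`,
`N(u) ⊆ N(v)` implies `u = v`. -/
def IndependentSperner {V : Type*} (G : SimpleGraph V) (K I : Finset V) : Prop :=
  ∀ u ∈ I, ∀ v ∈ I, G.neighborSet u ⊆ G.neighborSet v → u = v

/-- `(A, B)` is a bipartition of `G` into two disjoint independent sets covering
all vertices. -/
def IsBipartition {V : Type*} [Fintype V] (G : SimpleGraph V) (A B : Finset V) : Prop :=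
  Disjoint A B ∧ A ∪ B = Finset.univ ∧
    (∀ u ∈ A, ∀ v ∈ A, ¬ G.Adj u v) ∧ (∀ u ∈ B, ∀ v ∈ B, ¬ G.Adj u v)

/-- The labeled bigraph `(G, A, B)` is right-Sperner: for `u, v ∈ B`,
`N(u) ⊆ N(v)` implies `u = v`. -/
def RightSperner {V : Type*} (G : SimpleGraph V) (A B : Finset V) : Prop :=
  ∀ u ∈ B, ∀ v ∈ B, G.neighborSet u ⊆ G.neighborSet v → u = v

/-- The graph `2P₃`: disjoint union of the paths `0-1-2` and `3-4-5`. -/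
def twoP3 : SimpleGraph (Fin 6) :=
  SimpleGraph.fromRel (fun u v =>
    (u, v) ∈ ([(0,1),(1,2),(3,4),(4,5)] : List (Fin 6 × Fin 6)))

/-- The graph `H`: obtained from `2P₃` (paths `0-1-2` and `3-4-5`) by adding the
edge `1-4` between the two middle vertices. -/
def graphH : SimpleGraph (Fin 6) :=
  SimpleGraph.fromRel (fun u v =>
    (u, v) ∈ ([(0,1),(1,2),(3,4),(4,5),(1,4)] : List (Fin 6 × Fin 6)))

/-- The domination number: minimum size of a dominating set. -/
noncomputable def gamma {W : Type*} [Fintype W] (G : SimpleGraph W) : ℕ :=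
  sInf {n | ∃ D : Finset W, IsDomSet G D ∧ D.card = n}

/-- The total domination number: minimum size of a total dominating set. -/
noncomputable def gammaT {W : Type*} [Fintype W] (G : SimpleGraph W) : ℕ :=
  sInf {n | ∃ D : Finset W, (∀ v : W, ∃ u ∈ D, G.Adj u v) ∧ D.card = n}

/-- The connected domination number: minimum size of a connected dominating set. -/
noncomputable def gammaC {W : Type*} [Fintype W] (G : SimpleGraph W) : ℕ :=
  sInf {n | ∃ D : Finset W, IsDomSet G D ∧ (G.induce (D : Set W)).Connected ∧ D.card = n}

/-- The co-occurrence graph of a hypergraph: two distinct vertices are adjacent iff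
some hyperedge contains both. -/
def coOccurrenceGraph {W : Type*} (E : Set (Finset W)) : SimpleGraph W where
  Adj u v := u ≠ v ∧ ∃ e ∈ E, u ∈ e ∧ v ∈ e
  symm := by
    constructor
    rintro u v ⟨h, e, he, hu, hv⟩
    exact ⟨h.symm, e, he, hv, hu⟩
  loopless := by
    constructor
    rintro u ⟨h, -⟩
    exact h rfl

/-- The edge-clique split graph of a hypergraph `(V, E)`: vertex set `E ⊕ V`, the
hyperedges form a clique, the vertices an independent set, and `v ∈ V` is adjacent
to `e ∈ E` iff `v ∈ e`. -/
def edgeCliqueGraph {V : Type*} (E : Finset (Finset V)) :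
    SimpleGraph ({e // e ∈ E} ⊕ V) where
  Adj x y :=
    match x, y with
    | Sum.inl e, Sum.inl f => e ≠ f
    | Sum.inl e, Sum.inr v => v ∈ (e : Finset V)
    | Sum.inr v, Sum.inl e => v ∈ (e : Finset V)
    | Sum.inr _, Sum.inr _ => False
  symm := by
    constructor
    rintro (e | u) (f | v) h
    · exact Ne.symm h
    · exact h
    · exact h
    · exact h.elim
  loopless := by
    constructor
    rintro (e | v) h
    · exact h rfl
    · exact h

section Part1

variable {V : Type*} [Fintype V] [DecidableEq V] (G : SimpleGraph V)

/-- No alternating 4-cycle. -/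
def NoAC4 : Prop :=
  ¬ ∃ a b c d : V, a ≠ c ∧ b ≠ d ∧ G.Adj a b ∧ G.Adj c d ∧ ¬ G.Adj a c ∧ ¬ G.Adj b d

variable {G}

lemma mem_cliqueHyp {S : Finset V} :
    S ∈ CliqueHyp G ↔ G.IsClique (S : Set V) ∧ ∀ T : Finset V, G.IsClique (T : Set V) → S ⊆ T → T = S :=
  Iff.rfl

lemma clique_adj {S : Finset V} (hS : G.IsClique (S : Set V)) {x y : V}
    (hx : x ∈ S) (hy : y ∈ S) (hxy : x ≠ y) : G.Adj x y :=
  hS (by exact_mod_cast hx) (by exact_mod_cast hy) hxy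

lemma maxclique_insert {M : Finset V} (hM : M ∈ CliqueHyp G) {x : V}
    (hx : ∀ y ∈ M, y ≠ x → G.Adj x y) : x ∈ M := by
  have hcl : G.IsClique ((insert x M : Finset V) : Set V) := by
    intro u hu w hw huw
    simp only [Finset.coe_insert, Set.mem_insert_iff, Finset.mem_coe] at hu hw
    rcases hu with rfl | hu
    · rcases hw with rfl | hw
      · exact absurd rfl huw
      · exact hx w hw (fun h => huw h.symm)
    · rcases hw with rfl | hw
      · exact (hx u hu (fun h => huw h)).symm
      · exact hM.1 hu hw huw
  have := hM.2 _ hcl (Finset.subset_insert _ _)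
  rw [← this]; exact Finset.mem_insert_self _ _

lemma exists_maxclique {s : Finset V} (hs : G.IsClique (s : Set V)) :
    ∃ M ∈ CliqueHyp G, s ⊆ M := by
  classical
  have hne : (Finset.univ.filter (fun T : Finset V => G.IsClique (T : Set V) ∧ s ⊆ T)).Nonempty :=
    ⟨s, by simp [hs]⟩
  obtain ⟨M, hMmem, hMmax⟩ := Finset.exists_max_image _ (fun T : Finset V => T.card) hne
  simp only [Finset.mem_filter, Finset.mem_univ, true_and] at hMmem
  refine ⟨M, ⟨hMmem.1, ?_⟩, hMmem.2⟩
  intro T hT hMT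
  have hTmem : T ∈ Finset.univ.filter (fun T : Finset V => G.IsClique (T : Set V) ∧ s ⊆ T) := by
    simp only [Finset.mem_filter, Finset.mem_univ, true_and]
    exact ⟨hT, hMmem.2.trans hMT⟩
  exact (Finset.eq_of_subset_of_card_le hMT (hMmax T hTmem)).symm

/-- Every vertex of a clique `e` outside a maximal clique `f` has a non-neighbor in `f \ e`. -/
lemma exists_nonadj {e f : Finset V} (he : G.IsClique (e : Set V)) (hf : f ∈ CliqueHyp G)
    {a : V} (hae : a ∈ e) (haf : a ∉ f) :
    ∃ c, c ∈ f ∧ c ∉ e ∧ ¬ G.Adj a c := by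
  by_contra h
  push_neg at h
  have : a ∈ f := by
    apply maxclique_insert hf
    intro y hy hya
    by_cases hye : y ∈ e
    · exact clique_adj he hae hye (fun hh => haf (hh ▸ hy))
    · exact h y hy hye
  exact haf this

/-- Threshold graphs have no alternating 4-cycle. -/
lemma thresholdGraph_noAC4 (h : ThresholdGraph G) : NoAC4 G := by
  rintro ⟨a, b, c, d, hac, hbd, hab, hcd, hnac, hnbd⟩
  obtain ⟨w, t, hw⟩ := h
  have hab' : a ≠ b := hab.ne
  have hcd' : c ≠ d := hcd.ne
  have h1 : ¬ (w a + w b ≤ t) := by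
    intro hle
    have := (hw {a, b}).mp (by rwa [Finset.sum_pair hab'])
    exact (this a (by simp) b (by simp) hab).elim
  have h2 : ¬ (w c + w d ≤ t) := by
    intro hle
    have := (hw {c, d}).mp (by rwa [Finset.sum_pair hcd'])
    exact (this c (by simp) d (by simp) hcd).elim
  have key : ∀ x y : V, x ≠ y → ¬ G.Adj x y →
      ∀ u ∈ ({x, y} : Finset V), ∀ v ∈ ({x, y} : Finset V), ¬ G.Adj u v := by
    intro x y hxy hn u hu v hv hadj
    simp only [Finset.mem_insert, Finset.mem_singleton] at hu hv
    rcases hu with rfl | rfl <;> rcases hv with rfl | rfl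
    · exact G.loopless.irrefl _ hadj
    · exact hn hadj
    · exact hn hadj.symm
    · exact G.loopless.irrefl _ hadj
  have h3 : w a + w c ≤ t := by
    rw [← Finset.sum_pair hac]
    exact (hw {a, c}).mpr (key a c hac hnac)
  have h4 : w b + w d ≤ t := by
    rw [← Finset.sum_pair hbd]
    exact (hw {b, d}).mpr (key b d hbd hnbd)
  omega

end Part1
section Part2

variable {V : Type*} [Fintype V] [DecidableEq V] {G : SimpleGraph V}

/-- In a graph with no alternating 4-cycle, there is an isolated or a dominating vertex. -/
lemma exists_iso_or_dom (h : NoAC4 G) (hne : Nonempty V) :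
    ∃ v : V, (∀ u, ¬ G.Adj v u) ∨ (∀ u, u ≠ v → G.Adj v u) := by
  classical
  by_cases hiso : ∃ x : V, ∀ u, ¬ G.Adj x u
  · obtain ⟨x, hx⟩ := hiso; exact ⟨x, Or.inl hx⟩
  push_neg at hiso
  letI : DecidableRel G.Adj := fun a b => Classical.dec _
  obtain ⟨v, -, hvmax⟩ := Finset.exists_max_image Finset.univ (fun u => G.degree u)
    ⟨Classical.choice hne, Finset.mem_univ _⟩
  refine ⟨v, Or.inr ?_⟩
  by_contra hdom
  push_neg at hdom
  obtain ⟨x, hxv, hvx⟩ := hdom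
  obtain ⟨y, hxy⟩ := hiso x
  have hyv : y ≠ v := fun hh => hvx (hh ▸ hxy).symm
  have hxnv : x ∉ G.neighborFinset v := by
    rw [SimpleGraph.mem_neighborFinset]; exact hvx
  have hvv : v ∉ G.neighborFinset v := by
    rw [SimpleGraph.mem_neighborFinset]; exact G.loopless.irrefl v
  -- Step 1 : v is adjacent to y
  have hvy : G.Adj v y := by
    by_contra hvy
    by_cases hzz : ∀ z ∈ G.neighborFinset v, G.Adj y z
    · have hsub : insert x (G.neighborFinset v) ⊆ G.neighborFinset y := by
        intro u hu
        rw [Finset.mem_insert] at hu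
        rw [SimpleGraph.mem_neighborFinset]
        rcases hu with rfl | hu
        · exact hxy.symm
        · exact hzz u hu
      have hcard : G.degree v + 1 ≤ G.degree y := by
        have := Finset.card_le_card hsub
        rwa [Finset.card_insert_of_notMem hxnv] at this
      have := hvmax y (Finset.mem_univ y)
      simp only [SimpleGraph.degree] at *
      omega
    · push_neg at hzz
      obtain ⟨z, hz, hyz⟩ := hzz
      rw [SimpleGraph.mem_neighborFinset] at hz
      have hzy : z ≠ y := fun hh => hvy (hh ▸ hz)
      exact h ⟨v, z, x, y, Ne.symm hxv, hzy, hz, hxy, hvx, fun hh => hyz hh.symm⟩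
  -- Step 2
  by_cases h2 : ∀ z ∈ G.neighborFinset v, z ≠ y → G.Adj y z
  · have hymem : y ∈ G.neighborFinset v := by rw [SimpleGraph.mem_neighborFinset]; exact hvy
    have hsub : insert x (insert v ((G.neighborFinset v).erase y)) ⊆ G.neighborFinset y := by
      intro u hu
      rw [Finset.mem_insert, Finset.mem_insert] at hu
      rw [SimpleGraph.mem_neighborFinset]
      rcases hu with rfl | rfl | hu
      · exact hxy.symm
      · exact hvy.symm
      · exact h2 u (Finset.mem_of_mem_erase hu) (Finset.ne_of_mem_erase hu)
    have hc1 : v ∉ (G.neighborFinset v).erase y := fun hh => hvv (Finset.mem_of_mem_erase hh)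
    have hc2 : x ∉ insert v ((G.neighborFinset v).erase y) := by
      rw [Finset.mem_insert]
      rintro (rfl | hh)
      · exact hxv rfl
      · exact hxnv (Finset.mem_of_mem_erase hh)
    have hcard := Finset.card_le_card hsub
    rw [Finset.card_insert_of_notMem hc2, Finset.card_insert_of_notMem hc1,
      Finset.card_erase_of_mem hymem] at hcard
    have hpos : 1 ≤ (G.neighborFinset v).card := Finset.card_pos.mpr ⟨y, hymem⟩
    have := hvmax y (Finset.mem_univ y)
    simp only [SimpleGraph.degree] at *
    omega
  · push_neg at h2
    obtain ⟨z, hz, hzy, hyz⟩ := h2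
    rw [SimpleGraph.mem_neighborFinset] at hz
    exact h ⟨x, y, v, z, hxv, Ne.symm hzy, hxy, hz, fun hh => hvx hh.symm, hyz⟩

end Part2
section Part3

variable {V : Type*} [Fintype V] [DecidableEq V]

/-- Splitting a sum over a weight function defined by cases on `u = v`. -/
lemma sum_dite_split (v : V) (w' : {u : V // u ≠ v} → ℕ) (c0 : ℕ) (X : Finset V) :
    ∑ x ∈ X, (fun u => if h : u = v then c0 else w' ⟨u, h⟩) x
      = (if v ∈ X then c0 else 0) + ∑ y ∈ X.subtype (· ≠ v), w' y := by
  classical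
  have h1 : ∑ y ∈ X.subtype (· ≠ v), w' y
      = ∑ x ∈ X.erase v, (fun u => if h : u = v then c0 else w' ⟨u, h⟩) x := by
    rw [← Finset.filter_ne' X v, ← Finset.sum_subtype_eq_sum_filter]
    apply Finset.sum_congr rfl
    intro y _
    simp only [dif_neg y.prop]
  rw [h1]
  by_cases hv : v ∈ X
  · rw [if_pos hv]
    conv_lhs => rw [← Finset.insert_erase hv]
    rw [Finset.sum_insert (Finset.notMem_erase _ _)]
    simp
  · rw [if_neg hv, Finset.erase_eq_of_notMem hv, zero_add]

lemma noAC4_comap {G : SimpleGraph V} (h : NoAC4 G) (v : V) :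
    NoAC4 (G.comap (fun u : {u : V // u ≠ v} => (u : V))) := by
  rintro ⟨a, b, c, d, hac, hbd, hab, hcd, hnac, hnbd⟩
  exact h ⟨a, b, c, d, fun hh => hac (Subtype.ext hh), fun hh => hbd (Subtype.ext hh),
    hab, hcd, hnac, hnbd⟩

lemma card_subtype_ne_lt (v : V) :
    Fintype.card {u : V // u ≠ v} + 1 = Fintype.card V := by
  classical
  have h1 : Fintype.card {u : V // u ≠ v} = (Finset.univ.erase v).card := by
    rw [Fintype.card_subtype, Finset.filter_ne']
  have h4 : 1 ≤ Fintype.card V := Fintype.card_pos_iff.mpr ⟨v⟩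
  rw [h1, Finset.card_erase_of_mem (Finset.mem_univ v), Finset.card_univ]
  omega

/-- Positive-weight normalization for threshold graphs. -/
lemma thresholdGraph_pos_weights {G : SimpleGraph V} (h : ThresholdGraph G) :
    ∃ (w : V → ℕ) (t : ℕ), (∀ u, 1 ≤ w u) ∧ ∀ X : Finset V,
      ((∑ x ∈ X, w x) ≤ t ↔ ∀ u ∈ X, ∀ v ∈ X, ¬ G.Adj u v) := by
  obtain ⟨w, t, hw⟩ := h
  set n := Fintype.card V with hn
  refine ⟨fun u => (n+1) * w u + 1, (n+1) * t + n, fun u => Nat.le_add_left 1 _, fun X => ?_⟩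
  have hsum : ∑ x ∈ X, ((n+1) * w x + 1) = (n+1) * ∑ x ∈ X, w x + X.card := by
    rw [Finset.sum_add_distrib, ← Finset.mul_sum]
    simp
  have hXcard : X.card ≤ n := by
    rw [hn, ← Finset.card_univ]
    exact Finset.card_le_card (Finset.subset_univ X)
  rw [hsum, ← hw X]
  constructor
  · intro hle
    by_contra hgt
    push_neg at hgt
    have : (n+1) * (t+1) ≤ (n+1) * ∑ x ∈ X, w x := Nat.mul_le_mul_left _ hgt
    nlinarith
  · intro hle
    have : (n+1) * ∑ x ∈ X, w x ≤ (n+1) * t := Nat.mul_le_mul_left _ hle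
    omega

theorem thresholdGraph_of_noAC4_aux : ∀ n : ℕ, ∀ (V : Type*) (_ : Fintype V) (_ : DecidableEq V)
    (G : SimpleGraph V), NoAC4 G → Fintype.card V ≤ n → ThresholdGraph G := by
  intro n
  induction n with
  | zero =>
    intro V _ _ G _ hcard
    haveI : IsEmpty V := Fintype.card_eq_zero_iff.mp (Nat.le_zero.mp hcard)
    exact ⟨0, 0, fun X => ⟨fun _ u hu => (IsEmpty.false u).elim, fun _ => by simp⟩⟩
  | succ n ih =>
    intro V _ _ G hG hcard
    by_cases hV : IsEmpty V
    · exact ⟨0, 0, fun X => ⟨fun _ u hu => (IsEmpty.false u).elim, fun _ => by simp⟩⟩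
    rw [not_isEmpty_iff] at hV
    obtain ⟨v, hv⟩ := exists_iso_or_dom hG hV
    have hcard' : Fintype.card {u : V // u ≠ v} ≤ n := by
      have := card_subtype_ne_lt v
      omega
    have hth' := ih {u : V // u ≠ v} inferInstance inferInstance
      (G.comap (fun u : {u : V // u ≠ v} => (u : V))) (noAC4_comap hG v) hcard'
    rcases hv with hiso | hdom
    · -- isolated vertex
      obtain ⟨w', t', hw'⟩ := hth'
      refine ⟨fun u => if h : u = v then 0 else w' ⟨u, h⟩, t', fun X => ?_⟩
      rw [sum_dite_split v w' 0 X]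
      have hiff := hw' (X.subtype (· ≠ v))
      constructor
      · intro hle u hu x hx hadj
        by_cases huv : u = v
        · exact hiso x (huv ▸ hadj)
        by_cases hxv : x = v
        · exact hiso u (hxv ▸ hadj).symm
        · refine hiff.mp (by simpa using hle) ⟨u, huv⟩ (by simp [Finset.mem_subtype, hu])
            ⟨x, hxv⟩ (by simp [Finset.mem_subtype, hx]) hadj
      · intro hind
        have := hiff.mpr (fun a ha b hb =>
          hind a (Finset.mem_subtype.mp ha) b (Finset.mem_subtype.mp hb))
        simpa using this
    · -- dominating vertex
      obtain ⟨w', t', hpos', hw'⟩ := thresholdGraph_pos_weights hth'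
      refine ⟨fun u => if h : u = v then 2*t'+1 else 2 * w' ⟨u, h⟩, 2*t'+1, fun X => ?_⟩
      have hsplit := sum_dite_split v (fun y => 2 * w' y) (2*t'+1) X
      simp only at hsplit
      rw [hsplit, ← Finset.mul_sum]
      by_cases hvX : v ∈ X
      · rw [if_pos hvX]
        by_cases hXv : ∀ u ∈ X, u = v
        · -- X = {v}
          have hempty : X.subtype (· ≠ v) = ∅ := by
            rw [Finset.eq_empty_iff_forall_notMem]
            intro y hy
            rw [Finset.mem_subtype] at hy
            exact y.prop (hXv y hy)
          rw [hempty]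
          simp only [Finset.sum_empty, Nat.mul_zero, Nat.add_zero, le_refl, true_iff]
          intro u hu x hx hadj
          rw [hXv u hu, hXv x hx] at hadj
          exact G.loopless.irrefl v hadj
        · push_neg at hXv
          obtain ⟨u, huX, huv⟩ := hXv
          constructor
          · intro hle
            have h1 : 1 ≤ w' ⟨u, huv⟩ := hpos' _
            have hmem : (⟨u, huv⟩ : {u : V // u ≠ v}) ∈ X.subtype (· ≠ v) :=
              Finset.mem_subtype.mpr huX
            have h2 : w' ⟨u, huv⟩ ≤ ∑ y ∈ X.subtype (· ≠ v), w' y :=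
              Finset.single_le_sum (fun _ _ => Nat.zero_le _) hmem
            omega
          · intro hind
            exact absurd ((hdom u huv).symm) (hind u huX v hvX)
      · rw [if_neg hvX, Nat.zero_add]
        have hiff := hw' (X.subtype (· ≠ v))
        constructor
        · intro hle u hu x hx hadj
          have huv : u ≠ v := fun hh => hvX (hh ▸ hu)
          have hxv : x ≠ v := fun hh => hvX (hh ▸ hx)
          refine hiff.mp (by omega) ⟨u, huv⟩ (by simp [Finset.mem_subtype, hu])
            ⟨x, hxv⟩ (by simp [Finset.mem_subtype, hx]) hadj
        · intro hind
          have := hiff.mpr (fun a ha b hb =>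
            hind a (Finset.mem_subtype.mp ha) b (Finset.mem_subtype.mp hb))
          omega

theorem thresholdGraph_of_noAC4 {G : SimpleGraph V} (h : NoAC4 G) : ThresholdGraph G :=
  thresholdGraph_of_noAC4_aux (Fintype.card V) V ‹_› ‹_› G h le_rfl

end Part3
section Part4

variable {V : Type*} [Fintype V] [DecidableEq V] {G : SimpleGraph V}

lemma sdiff_nonempty_of_maxcliques {e f : Finset V} (he : e ∈ CliqueHyp G)
    (hf : f ∈ CliqueHyp G) (hef : e ≠ f) : (e \ f).Nonempty := by
  rw [Finset.sdiff_nonempty]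
  intro hsub
  exact hef (he.2 f hf.1 hsub).symm

lemma oneSperner_of_noAC4 (h : NoAC4 G) : OneSperner (CliqueHyp G) := by
  intro e he f hf hef
  have h1 : 1 ≤ (e \ f).card := Finset.card_pos.mpr (sdiff_nonempty_of_maxcliques he hf hef)
  have h2 : 1 ≤ (f \ e).card := Finset.card_pos.mpr (sdiff_nonempty_of_maxcliques hf he (Ne.symm hef))
  by_contra hmin
  have hboth : 2 ≤ (e \ f).card ∧ 2 ≤ (f \ e).card := by omega
  obtain ⟨hce, hcf⟩ := hboth
  obtain ⟨a, ha⟩ := sdiff_nonempty_of_maxcliques he hf hef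
  obtain ⟨hae, haf⟩ := Finset.mem_sdiff.mp ha
  obtain ⟨c, hcfmem, hcne, hnac⟩ := exists_nonadj he.1 hf hae haf
  obtain ⟨b, hb, hba⟩ := Finset.exists_mem_ne (s := e \ f) (by omega) a
  obtain ⟨hbe, hbf⟩ := Finset.mem_sdiff.mp hb
  obtain ⟨d, hd, hdc⟩ := Finset.exists_mem_ne (s := f \ e) (by omega) c
  obtain ⟨hdf, hde⟩ := Finset.mem_sdiff.mp hd
  have hab : G.Adj a b := clique_adj he.1 hae hbe (Ne.symm hba)
  obtain ⟨d', hd'f, hd'e, hnbd'⟩ := exists_nonadj he.1 hf hbe hbf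
  by_cases hd'c : d' = c
  · -- ¬ Adj b c
    rw [hd'c] at hnbd'
    obtain ⟨b'', hb''e, hb''f, hndb''⟩ := exists_nonadj hf.1 he hdf hde
    by_cases hb''a : b'' = a
    · rw [hb''a] at hndb''
      -- AC4 (a, b, d, c)
      exact h ⟨a, b, d, c, fun hh => hde (hh ▸ hae), fun hh => hcne (hh ▸ hbe),
        hab, clique_adj hf.1 hdf hcfmem hdc, fun hh => hndb'' hh.symm, hnbd'⟩
    · -- AC4 (a, b'', c, d)
      exact h ⟨a, b'', c, d, fun hh => hcne (hh ▸ hae), fun hh => hde (hh ▸ hb''e),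
        clique_adj he.1 hae hb''e (Ne.symm hb''a), clique_adj hf.1 hcfmem hdf (Ne.symm hdc),
        hnac, fun hh => hndb'' hh.symm⟩
  · -- AC4 (a, b, c, d')
    exact h ⟨a, b, c, d', fun hh => hcne (hh ▸ hae), fun hh => hd'e (hh ▸ hbe),
      hab, clique_adj hf.1 hcfmem hd'f (fun hh => hd'c hh.symm), hnac, hnbd'⟩

end Part4
section Part5

variable {V : Type*} [Fintype V] [DecidableEq V] {G : SimpleGraph V}

lemma pair_isClique {a b : V} (hab : G.Adj a b) :
    G.IsClique (({a, b} : Finset V) : Set V) := by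
  intro x hx y hy hxy
  simp only [Finset.coe_insert, Finset.coe_singleton, Set.mem_insert_iff,
    Set.mem_singleton_iff] at hx hy
  rcases hx with rfl | rfl <;> rcases hy with rfl | rfl
  · exact absurd rfl hxy
  · exact hab
  · exact hab.symm
  · exact absurd rfl hxy

lemma noAC4_of_oneSperner (hos : OneSperner (CliqueHyp G)) : NoAC4 G := by
  rintro ⟨a, b, c, d, hac, hbd, hab, hcd, hnac, hnbd⟩
  obtain ⟨e, he, habe⟩ := exists_maxclique (pair_isClique hab)
  obtain ⟨f, hf, hcdf⟩ := exists_maxclique (pair_isClique hcd)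
  have hae : a ∈ e := habe (by simp)
  have hbe : b ∈ e := habe (by simp)
  have hcf : c ∈ f := hcdf (by simp)
  have hdf : d ∈ f := hcdf (by simp)
  have haf : a ∉ f := fun hh => hnac (clique_adj hf.1 hh hcf hac)
  have hbf : b ∉ f := fun hh => hnbd (clique_adj hf.1 hh hdf hbd)
  have hce : c ∉ e := fun hh => hnac (clique_adj he.1 hae hh hac)
  have hde : d ∉ e := fun hh => hnbd (clique_adj he.1 hbe hh hbd)
  have hef : e ≠ f := fun hh => haf (hh ▸ hae)
  have h1 : 2 ≤ (e \ f).card := by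
    have hsub : ({a, b} : Finset V) ⊆ e \ f := by
      intro x hx
      simp only [Finset.mem_insert, Finset.mem_singleton] at hx
      rcases hx with rfl | rfl <;> simp [Finset.mem_sdiff, hae, haf, hbe, hbf]
    have := Finset.card_le_card hsub
    rwa [Finset.card_pair hab.ne] at this
  have h2 : 2 ≤ (f \ e).card := by
    have hsub : ({c, d} : Finset V) ⊆ f \ e := by
      intro x hx
      simp only [Finset.mem_insert, Finset.mem_singleton] at hx
      rcases hx with rfl | rfl <;> simp [Finset.mem_sdiff, hcf, hce, hdf, hde]
    have := Finset.card_le_card hsub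
    rwa [Finset.card_pair hcd.ne] at this
  have := hos e he f hf hef
  omega

end Part5
section Part6a

variable {V : Type*} [Fintype V] [DecidableEq V] {G : SimpleGraph V} {v : V}

local notation "emb" => Function.Embedding.subtype (fun u : V => u ≠ v)

lemma v_not_mem_map (s : Finset {u : V // u ≠ v}) : v ∉ s.map emb := by
  rw [Finset.mem_map]
  rintro ⟨x, -, hx⟩
  exact x.prop (by simpa using hx)

lemma map_subtype_self (s : Finset {u : V // u ≠ v}) :
    (s.map emb).subtype (· ≠ v) = s := by
  ext y
  simp only [Finset.mem_subtype, Finset.mem_map, Function.Embedding.coe_subtype]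
  constructor
  · rintro ⟨x, hx, hxy⟩
    rwa [← Subtype.ext hxy]
  · intro hy
    exact ⟨y, hy, rfl⟩

lemma subtype_map_self {M : Finset V} (hM : v ∉ M) :
    (M.subtype (· ≠ v)).map emb = M := by
  rw [Finset.subtype_map, Finset.filter_ne', Finset.erase_eq_of_notMem hM]

lemma isClique_map_iff (s : Finset {u : V // u ≠ v}) :
    G.IsClique ((s.map emb : Finset V) : Set V) ↔
      (G.comap (fun u : {u : V // u ≠ v} => (u : V))).IsClique (s : Set {u : V // u ≠ v}) := by
  constructor
  · intro h x hx y hy hxy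
    have hx' : (x : V) ∈ (s.map emb : Finset V) := by
      rw [Finset.mem_map]; exact ⟨x, hx, rfl⟩
    have hy' : (y : V) ∈ (s.map emb : Finset V) := by
      rw [Finset.mem_map]; exact ⟨y, hy, rfl⟩
    exact h (by exact_mod_cast hx') (by exact_mod_cast hy') (fun hh => hxy (Subtype.ext hh))
  · intro h x hx y hy hxy
    rw [Finset.mem_coe, Finset.mem_map] at hx hy
    obtain ⟨x', hx', rfl⟩ := hx
    obtain ⟨y', hy', rfl⟩ := hy
    exact h hx' hy' (fun hh => hxy (congrArg _ hh))

lemma isClique_subtype_iff {M : Finset V} (hM : v ∉ M) :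
    G.IsClique (M : Set V) ↔
      (G.comap (fun u : {u : V // u ≠ v} => (u : V))).IsClique
        ((M.subtype (· ≠ v) : Finset {u : V // u ≠ v}) : Set {u : V // u ≠ v}) := by
  rw [← isClique_map_iff, subtype_map_self hM]

/-- Transfer of maximal cliques when `v` is dominating. -/
lemma cliqueHyp_dom (hdom : ∀ u, u ≠ v → G.Adj v u) (M : Finset V) :
    M ∈ CliqueHyp G ↔ v ∈ M ∧
      (M.erase v).subtype (· ≠ v) ∈ CliqueHyp (G.comap (fun u : {u : V // u ≠ v} => (u : V))) := by
  constructor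
  · intro hM
    have hvM : v ∈ M := maxclique_insert hM (fun y hy hyv => hdom y hyv)
    refine ⟨hvM, ?_, ?_⟩
    · rw [← isClique_subtype_iff (Finset.notMem_erase _ _)]
      exact hM.1.subset (by simp [Finset.erase_subset])
    · intro T' hT' hsub
      have hTclique : G.IsClique ((insert v (T'.map emb) : Finset V) : Set V) := by
        intro x hx y hy hxy
        simp only [Finset.coe_insert, Set.mem_insert_iff, Finset.mem_coe] at hx hy
        rcases hx with rfl | hx
        · rcases hy with rfl | hy
          · exact absurd rfl hxy
          · exact hdom y (by rintro rfl; exact v_not_mem_map T' hy)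
        · rcases hy with rfl | hy
          · exact (hdom x (by rintro rfl; exact v_not_mem_map T' hx)).symm
          · exact ((isClique_map_iff T').mpr hT') hx hy hxy
      have hMsub : M ⊆ insert v (T'.map emb) := by
        intro x hxM
        by_cases hxv : x = v
        · simp [hxv]
        · have : x ∈ M.erase v := Finset.mem_erase.mpr ⟨hxv, hxM⟩
          have hmem : (⟨x, hxv⟩ : {u : V // u ≠ v}) ∈ (M.erase v).subtype (· ≠ v) :=
            Finset.mem_subtype.mpr this
          have := hsub hmem
          apply Finset.mem_insert_of_mem
          rw [Finset.mem_map]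
          exact ⟨⟨x, hxv⟩, this, rfl⟩
      have heq := hM.2 _ hTclique hMsub
      apply Finset.Subset.antisymm _ hsub
      intro y hy
      have hyM : (y : V) ∈ M := by
        rw [← heq]
        apply Finset.mem_insert_of_mem
        rw [Finset.mem_map]
        exact ⟨y, hy, rfl⟩
      exact Finset.mem_subtype.mpr (Finset.mem_erase.mpr ⟨y.prop, hyM⟩)
  · rintro ⟨hvM, hM'⟩
    have herase : ((M.erase v).subtype (· ≠ v)).map emb = M.erase v :=
      subtype_map_self (Finset.notMem_erase _ _)
    constructor
    · intro x hx y hy hxy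
      rw [Finset.mem_coe] at hx hy
      by_cases hxv : x = v
      · subst hxv
        exact hdom y (fun hh => hxy hh.symm)
      by_cases hyv : y = v
      · subst hyv
        exact (hdom x hxv).symm
      · have hcl : G.IsClique ((M.erase v : Finset V) : Set V) :=
          (isClique_subtype_iff (Finset.notMem_erase _ _)).mpr hM'.1
        exact hcl (Finset.mem_coe.mpr (Finset.mem_erase.mpr ⟨hxv, hx⟩))
          (Finset.mem_coe.mpr (Finset.mem_erase.mpr ⟨hyv, hy⟩)) hxy
    · intro T hT hsub
      have hvT : v ∈ T := hsub hvM
      have hT' : (G.comap (fun u : {u : V // u ≠ v} => (u : V))).IsClique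
          (((T.erase v).subtype (· ≠ v) : Finset _) : Set _) := by
        rw [← isClique_subtype_iff (Finset.notMem_erase _ _)]
        exact hT.subset (by simp [Finset.erase_subset])
      have hsub' : (M.erase v).subtype (· ≠ v) ⊆ (T.erase v).subtype (· ≠ v) := by
        intro y hy
        rw [Finset.mem_subtype] at hy ⊢
        exact Finset.erase_subset_erase _ hsub hy
      have heq := hM'.2 _ hT' hsub'
      have heq2 : T.erase v = M.erase v := by
        rw [← herase, ← heq, subtype_map_self (Finset.notMem_erase _ _)]
      rw [← Finset.insert_erase hvT, ← Finset.insert_erase hvM, heq2]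

/-- When `v` is isolated, `{v}` is a maximal clique. -/
lemma singleton_mem_cliqueHyp_iso (hiso : ∀ u, ¬ G.Adj v u) :
    ({v} : Finset V) ∈ CliqueHyp G := by
  constructor
  · intro x hx y hy hxy
    simp only [Finset.coe_singleton, Set.mem_singleton_iff] at hx hy
    exact absurd (hx.trans hy.symm) hxy
  · intro T hT hsub
    apply Finset.Subset.antisymm _ hsub
    intro u hu
    rw [Finset.mem_singleton]
    by_contra huv
    exact hiso u (hT (hsub (Finset.mem_singleton_self v)) hu (fun hh => huv hh.symm))

lemma eq_singleton_of_mem_iso (hiso : ∀ u, ¬ G.Adj v u) {M : Finset V}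
    (hM : M ∈ CliqueHyp G) (hvM : v ∈ M) : M = {v} := by
  apply Finset.Subset.antisymm
  · intro u hu
    rw [Finset.mem_singleton]
    by_contra huv
    exact hiso u (hM.1 hvM hu (fun hh => huv hh.symm))
  · simpa using hvM

/-- Transfer of maximal cliques avoiding an isolated vertex `v`. -/
lemma cliqueHyp_iso (hiso : ∀ u, ¬ G.Adj v u) (hV' : Nonempty {u : V // u ≠ v})
    (M : Finset V) (hvM : v ∉ M) :
    M ∈ CliqueHyp G ↔
      M.subtype (· ≠ v) ∈ CliqueHyp (G.comap (fun u : {u : V // u ≠ v} => (u : V))) := by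
  have hmapM : (M.subtype (· ≠ v)).map emb = M := subtype_map_self hvM
  constructor
  · intro hM
    refine ⟨(isClique_subtype_iff hvM).mp hM.1, ?_⟩
    intro T' hT' hsub
    have hTclique : G.IsClique ((T'.map emb : Finset V) : Set V) := (isClique_map_iff T').mpr hT'
    have hMsub : M ⊆ T'.map emb := by
      conv_lhs => rw [← hmapM]
      exact Finset.map_subset_map.mpr hsub
    have := hM.2 _ hTclique hMsub
    rw [← this, map_subtype_self]
  · intro hM'
    constructor
    · exact (isClique_subtype_iff hvM).mpr hM'.1
    · intro T hT hsub
      have hvT : v ∉ T := by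
        intro hvT
        -- T is a clique containing v; since v is isolated, T = {v}; then M ⊆ {v} with v ∉ M
        have hT1 : T ⊆ {v} := by
          intro u hu
          rw [Finset.mem_singleton]
          by_contra huv
          exact hiso u (hT hvT hu (fun hh => huv hh.symm))
        have hMv : M ⊆ {v} := hsub.trans hT1
        have hMempty : M = ∅ := by
          rw [Finset.eq_empty_iff_forall_notMem]
          intro x hx
          have := hMv hx
          rw [Finset.mem_singleton] at this
          exact hvM (this ▸ hx)
        -- but then M.subtype = ∅ is a maximal clique, contradicting nonempty V'
        obtain ⟨u₀⟩ := hV'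
        have hsing : (G.comap (fun u : {u : V // u ≠ v} => (u : V))).IsClique
            (({u₀} : Finset {u : V // u ≠ v}) : Set _) := by
          intro x hx y hy hxy
          simp only [Finset.coe_singleton, Set.mem_singleton_iff] at hx hy
          exact absurd (hx.trans hy.symm) hxy
        have hempty : M.subtype (· ≠ v) = ∅ := by
          rw [hMempty]; rfl
        have := hM'.2 {u₀} hsing (by rw [hempty]; exact Finset.empty_subset _)
        rw [hempty] at this
        exact absurd this (Finset.singleton_ne_empty u₀)
      have hT'mem : (G.comap (fun u : {u : V // u ≠ v} => (u : V))).IsClique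
          ((T.subtype (· ≠ v) : Finset _) : Set _) := (isClique_subtype_iff hvT).mp hT
      have hsub' : M.subtype (· ≠ v) ⊆ T.subtype (· ≠ v) := by
        intro y hy
        rw [Finset.mem_subtype] at hy ⊢
        exact hsub hy
      have := hM'.2 _ hT'mem hsub'
      rw [← subtype_map_self hvT, this, hmapM]

end Part6a
section Part6b

variable {V : Type*} [Fintype V] [DecidableEq V]

theorem hypThreshold_empty_case (V : Type*) (iF : Fintype V) (iD : DecidableEq V)
    (G : SimpleGraph V) (hVempty : IsEmpty V) : HypThreshold (CliqueHyp G) := by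
  refine ⟨0, 0, fun X => ⟨fun _ => ⟨∅, ⟨?_, ?_⟩, Finset.empty_subset X⟩, fun _ => by simp⟩⟩
  · intro x hx
    exact absurd hx (by simp)
  · intro T _ _
    exact Finset.eq_empty_of_isEmpty T

theorem hypThreshold_of_noAC4_aux : ∀ n : ℕ, ∀ (V : Type*) (_ : Fintype V) (_ : DecidableEq V)
    (G : SimpleGraph V), NoAC4 G → Fintype.card V ≤ n → HypThreshold (CliqueHyp G) := by
  intro n
  induction n with
  | zero =>
    intro V iF iD G _ hcard
    exact hypThreshold_empty_case V iF iD G (Fintype.card_eq_zero_iff.mp (Nat.le_zero.mp hcard))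
  | succ n ih =>
    intro V iF iD G hG hcard
    by_cases hV : IsEmpty V
    · exact hypThreshold_empty_case V iF iD G hV
    rw [not_isEmpty_iff] at hV
    obtain ⟨v, hv⟩ := exists_iso_or_dom hG hV
    have hcard' : Fintype.card {u : V // u ≠ v} ≤ n := by
      have := card_subtype_ne_lt v
      omega
    have hth' := ih {u : V // u ≠ v} inferInstance inferInstance
      (G.comap (fun u : {u : V // u ≠ v} => (u : V))) (noAC4_comap hG v) hcard'
    obtain ⟨w', t', hw'⟩ := hth'
    rcases hv with hiso | hdom
    · -- isolated vertex
      by_cases hall : ∀ u : V, u = v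
      · -- single vertex graph
        refine ⟨fun _ => 1, 1, fun X => ?_⟩
        have hsum : ∑ x ∈ X, (1 : ℕ) = X.card := by simp
        rw [hsum]
        constructor
        · intro hle
          have hpos : 0 < X.card := by omega
          obtain ⟨u, hu⟩ := Finset.card_pos.mp hpos
          rw [hall u] at hu
          exact ⟨{v}, singleton_mem_cliqueHyp_iso hiso, Finset.singleton_subset_iff.mpr hu⟩
        · rintro ⟨M, hM, hMX⟩
          have hMne : M.Nonempty := by
            rcases Finset.eq_empty_or_nonempty M with rfl | hne
            · exfalso
              have hsing : G.IsClique (({v} : Finset V) : Set V) :=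
                (singleton_mem_cliqueHyp_iso hiso).1
              have := hM.2 {v} hsing (Finset.empty_subset _)
              exact Finset.singleton_ne_empty v this
            · exact hne
          have : 1 ≤ X.card := Finset.card_pos.mpr (hMne.mono hMX)
          omega
      · push_neg at hall
        obtain ⟨u₀, hu₀⟩ := hall
        have hV' : Nonempty {u : V // u ≠ v} := ⟨⟨u₀, hu₀⟩⟩
        have ht'pos : 1 ≤ t' := by
          by_contra h0
          have := (hw' ∅).mp (by simp; omega)
          obtain ⟨M', hM', hM'sub⟩ := this
          have hM'empty : M' = ∅ := Finset.subset_empty.mp hM'sub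
          subst hM'empty
          obtain ⟨y₀⟩ := hV'
          have hsing : (G.comap (fun u : {u : V // u ≠ v} => (u : V))).IsClique
              (({y₀} : Finset {u : V // u ≠ v}) : Set _) := by
            intro x hx y hy hxy
            simp only [Finset.coe_singleton, Set.mem_singleton_iff] at hx hy
            exact absurd (hx.trans hy.symm) hxy
          have := hM'.2 {y₀} hsing (Finset.empty_subset _)
          exact Finset.singleton_ne_empty y₀ this
        refine ⟨fun u => if h : u = v then t' else w' ⟨u, h⟩, t', fun X => ?_⟩
        rw [sum_dite_split v w' t' X]
        by_cases hvX : v ∈ X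
        · rw [if_pos hvX]
          constructor
          · intro _
            exact ⟨{v}, singleton_mem_cliqueHyp_iso hiso, Finset.singleton_subset_iff.mpr hvX⟩
          · intro _
            omega
        · rw [if_neg hvX, Nat.zero_add]
          rw [hw' (X.subtype (· ≠ v))]
          constructor
          · rintro ⟨M', hM', hM'sub⟩
            refine ⟨M'.map (Function.Embedding.subtype _),
              (cliqueHyp_iso hiso hV' _ (v_not_mem_map M')).mpr
                (by rw [map_subtype_self]; exact hM'), ?_⟩
            intro x hx
            rw [Finset.mem_map] at hx
            obtain ⟨y, hy, rfl⟩ := hx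
            exact Finset.mem_subtype.mp (hM'sub hy)
          · rintro ⟨M, hM, hMX⟩
            have hvM : v ∉ M := fun hh => hvX (hMX hh)
            refine ⟨M.subtype (· ≠ v), (cliqueHyp_iso hiso hV' M hvM).mp hM, ?_⟩
            intro y hy
            rw [Finset.mem_subtype] at hy ⊢
            exact hMX hy
    · -- dominating vertex
      set S' : ℕ := ∑ y : {u : V // u ≠ v}, w' y with hS'
      refine ⟨fun u => if h : u = v then S' + 1 else w' ⟨u, h⟩, t' + (S' + 1), fun X => ?_⟩
      rw [sum_dite_split v w' (S'+1) X]
      by_cases hvX : v ∈ X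
      · rw [if_pos hvX]
        have hiff := hw' (X.subtype (· ≠ v))
        constructor
        · intro hle
          obtain ⟨M', hM', hM'sub⟩ := hiff.mp (by omega)
          refine ⟨insert v (M'.map (Function.Embedding.subtype _)), ?_, ?_⟩
          · rw [cliqueHyp_dom hdom]
            refine ⟨Finset.mem_insert_self _ _, ?_⟩
            rw [Finset.erase_insert (v_not_mem_map M'), map_subtype_self]
            exact hM'
          · rw [Finset.insert_subset_iff]
            refine ⟨hvX, ?_⟩
            intro x hx
            rw [Finset.mem_map] at hx
            obtain ⟨y, hy, rfl⟩ := hx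
            exact Finset.mem_subtype.mp (hM'sub hy)
        · rintro ⟨M, hM, hMX⟩
          rw [cliqueHyp_dom hdom] at hM
          obtain ⟨hvM, hM'⟩ := hM
          have : t' ≤ ∑ y ∈ X.subtype (· ≠ v), w' y := by
            apply hiff.mpr
            refine ⟨(M.erase v).subtype (· ≠ v), hM', ?_⟩
            intro y hy
            rw [Finset.mem_subtype] at hy ⊢
            exact hMX (Finset.mem_of_mem_erase hy)
          omega
      · rw [if_neg hvX, Nat.zero_add]
        have hbound : ∑ y ∈ X.subtype (· ≠ v), w' y ≤ S' := by
          rw [hS']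
          exact Finset.sum_le_sum_of_subset (Finset.subset_univ _)
        constructor
        · intro hle
          omega
        · rintro ⟨M, hM, hMX⟩
          rw [cliqueHyp_dom hdom] at hM
          exact absurd (hMX hM.1) hvX

theorem hypThreshold_of_noAC4 {G : SimpleGraph V} (h : NoAC4 G) : HypThreshold (CliqueHyp G) :=
  hypThreshold_of_noAC4_aux (Fintype.card V) V ‹_› ‹_› G h le_rfl

end Part6b
section Part7

variable {V : Type*} [Fintype V] [DecidableEq V]

lemma sum_eq_sum_chiVec (w : V → ℕ) (X : Finset V) :
    ∑ x ∈ X, w x = ∑ u : V, w u * chiVec X u := by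
  unfold chiVec
  simp only [mul_ite, mul_one, mul_zero]
  rw [Finset.sum_ite_mem, Finset.univ_inter]

lemma twoAsummable_of_hypThreshold {E : Set (Finset V)} (h : HypThreshold E) :
    TwoAsummable E := by
  rintro ⟨A₁, A₂, B₁, B₂, hA1, hA2, hB1, hB2, hchi⟩
  obtain ⟨w, t, hw⟩ := h
  have sA1 : ¬ t ≤ ∑ x ∈ A₁, w x := fun hh => hA1 ((hw _).mp hh)
  have sA2 : ¬ t ≤ ∑ x ∈ A₂, w x := fun hh => hA2 ((hw _).mp hh)
  have sB1 : t ≤ ∑ x ∈ B₁, w x := (hw _).mpr hB1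
  have sB2 : t ≤ ∑ x ∈ B₂, w x := (hw _).mpr hB2
  have key : ∑ x ∈ A₁, w x + ∑ x ∈ A₂, w x = ∑ x ∈ B₁, w x + ∑ x ∈ B₂, w x := by
    rw [sum_eq_sum_chiVec w A₁, sum_eq_sum_chiVec w A₂, sum_eq_sum_chiVec w B₁,
      sum_eq_sum_chiVec w B₂, ← Finset.sum_add_distrib, ← Finset.sum_add_distrib]
    apply Finset.sum_congr rfl
    intro u _
    rw [← Nat.mul_add, ← Nat.mul_add, hchi u]
  omega

end Part7
section Part8a

variable {V : Type*} [Fintype V] [DecidableEq V] {G : SimpleGraph V}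

/-- If `x` is not in a maximal clique, it has a non-neighbor inside it. -/
lemma nonadj_of_not_mem {M : Finset V} (hM : M ∈ CliqueHyp G) {x : V} (hx : x ∉ M) :
    ∃ y ∈ M, y ≠ x ∧ ¬ G.Adj x y := by
  by_contra hcon
  push_neg at hcon
  exact hx (maxclique_insert hM (fun y hy hyx => hcon y hy hyx))

lemma A1_indep {e f : Finset V} (he : e ∈ CliqueHyp G) (hf : f ∈ CliqueHyp G)
    (h2e : 2 ≤ (e \ f).card) (h2f : 2 ≤ (f \ e).card)
    {a c : V} (ha : a ∈ e \ f) (hc : c ∈ f \ e) (hnac : ¬ G.Adj a c) :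
    ¬ HypDep (CliqueHyp G) ((e ∩ f) ∪ {a, c}) := by
  obtain ⟨hae, haf⟩ := Finset.mem_sdiff.mp ha
  obtain ⟨hcf, hce⟩ := Finset.mem_sdiff.mp hc
  have hac : a ≠ c := fun hh => hce (hh ▸ hae)
  rintro ⟨M, hM, hMsub⟩
  by_cases hcM : c ∈ M
  · have haM : a ∉ M := fun haM => hnac (clique_adj hM.1 haM hcM hac)
    have hMf : M ⊆ f := by
      intro x hxM
      rcases Finset.mem_union.mp (hMsub hxM) with hx | hx
      · exact (Finset.mem_inter.mp hx).2
      · rcases Finset.mem_insert.mp hx with rfl | hx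
        · exact absurd hxM haM
        · rw [Finset.mem_singleton] at hx
          exact hx ▸ hcf
    have hfM : f = M := hM.2 f hf.1 hMf
    obtain ⟨d', hd', hd'c⟩ := Finset.exists_mem_ne (s := f \ e) (by omega) c
    obtain ⟨hd'f, hd'e⟩ := Finset.mem_sdiff.mp hd'
    have : d' ∈ M := hfM ▸ hd'f
    rcases Finset.mem_union.mp (hMsub this) with hx | hx
    · exact hd'e (Finset.mem_inter.mp hx).1
    · rcases Finset.mem_insert.mp hx with rfl | hx
      · exact hd'e hae
      · rw [Finset.mem_singleton] at hx
        exact hd'c hx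
  · have hMe : M ⊆ e := by
      intro x hxM
      rcases Finset.mem_union.mp (hMsub hxM) with hx | hx
      · exact (Finset.mem_inter.mp hx).1
      · rcases Finset.mem_insert.mp hx with rfl | hx
        · exact hae
        · rw [Finset.mem_singleton] at hx
          exact absurd (hx ▸ hxM) hcM
    have heM : e = M := hM.2 e he.1 hMe
    obtain ⟨b', hb', hb'a⟩ := Finset.exists_mem_ne (s := e \ f) (by omega) a
    obtain ⟨hb'e, hb'f⟩ := Finset.mem_sdiff.mp hb'
    have : b' ∈ M := heM ▸ hb'e
    rcases Finset.mem_union.mp (hMsub this) with hx | hx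
    · exact hb'f (Finset.mem_inter.mp hx).2
    · rcases Finset.mem_insert.mp hx with rfl | hx
      · exact hb'a rfl
      · rw [Finset.mem_singleton] at hx
        exact hb'f (hx ▸ hcf)

lemma chi_swap {e f : Finset V} {a c : V} (hae : a ∈ e) (haf : a ∉ f) (hcf : c ∈ f)
    (hce : c ∉ e) (u : V) :
    chiVec ((e ∩ f) ∪ {a, c}) u + chiVec ((e ∪ f) \ {a, c}) u = chiVec e u + chiVec f u := by
  unfold chiVec
  by_cases h1 : u ∈ e <;> by_cases h2 : u ∈ f <;> by_cases h3 : u = a <;> by_cases h4 : u = c <;>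
    simp_all [Finset.mem_union, Finset.mem_inter, Finset.mem_sdiff, Finset.mem_insert,
      Finset.mem_singleton]

lemma witness_false (h2 : TwoAsummable (CliqueHyp G)) {e f : Finset V}
    (he : e ∈ CliqueHyp G) (hf : f ∈ CliqueHyp G)
    (h2e : 2 ≤ (e \ f).card) (h2f : 2 ≤ (f \ e).card)
    {a c : V} (ha : a ∈ e \ f) (hc : c ∈ f \ e) (hnac : ¬ G.Adj a c)
    (hA2 : ¬ HypDep (CliqueHyp G) ((e ∪ f) \ {a, c})) : False := by
  obtain ⟨hae, haf⟩ := Finset.mem_sdiff.mp ha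
  obtain ⟨hcf, hce⟩ := Finset.mem_sdiff.mp hc
  exact h2 ⟨(e ∩ f) ∪ {a, c}, (e ∪ f) \ {a, c}, e, f,
    A1_indep he hf h2e h2f ha hc hnac, hA2,
    ⟨e, he, Finset.Subset.refl e⟩, ⟨f, hf, Finset.Subset.refl f⟩,
    chi_swap hae haf hcf hce⟩

end Part8a
section Part8b

variable {V : Type*} [Fintype V] [DecidableEq V] {G : SimpleGraph V}

lemma L2 {e f : Finset V} (he : e ∈ CliqueHyp G) (hf : f ∈ CliqueHyp G)
    (hene : (e \ f).Nonempty) (hf2 : (f \ e).card = 2)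
    (HFAIL : ∀ a c, a ∈ e \ f → c ∈ f \ e → ¬ G.Adj a c →
      HypDep (CliqueHyp G) ((e ∪ f) \ {a, c})) : False := by
  -- auxiliary: property of a failing candidate
  have hR : ∀ x cc cc', x ∈ e \ f → cc ∈ f \ e → cc' ∈ f \ e → cc' ≠ cc → ¬ G.Adj x cc →
      ¬ G.Adj x cc' ∧ ∃ M ∈ CliqueHyp G, M ⊆ (e ∪ f) \ {x, cc} ∧ cc' ∈ M ∧
        ∀ y ∈ M, y ∉ e → y = cc' := by
    intro x cc cc' hx hcc hcc' hne hnadj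
    obtain ⟨M, hM, hMsub⟩ := HFAIL x cc hx hcc hnadj
    have hxM : x ∉ M := fun hh => ((Finset.mem_sdiff.mp (hMsub hh)).2 (by simp))
    have hccM : cc ∉ M := fun hh => ((Finset.mem_sdiff.mp (hMsub hh)).2 (by simp))
    have hfe_pair : ({cc, cc'} : Finset V) = f \ e := by
      apply Finset.eq_of_subset_of_card_le
      · intro z hz
        rcases Finset.mem_insert.mp hz with rfl | hz
        · exact hcc
        · rw [Finset.mem_singleton] at hz; exact hz ▸ hcc'
      · rw [hf2, Finset.card_pair (Ne.symm hne)]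
    have hkey : ∀ y ∈ M, y ∉ e → y = cc' := by
      intro y hyM hye
      have hyef : y ∈ e ∪ f := Finset.sdiff_subset (hMsub hyM)
      have hyfe : y ∈ f \ e := Finset.mem_sdiff.mpr ⟨(Finset.mem_union.mp hyef).resolve_left hye, hye⟩
      rw [← hfe_pair] at hyfe
      rcases Finset.mem_insert.mp hyfe with rfl | hy
      · exact absurd hyM hccM
      · exact Finset.mem_singleton.mp hy
    have hMnot_e : ∃ y₀ ∈ M, y₀ ∉ e := by
      by_contra hcon
      push_neg at hcon
      have : e = M := hM.2 e he.1 hcon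
      exact hxM (this ▸ (Finset.mem_sdiff.mp hx).1)
    obtain ⟨y₀, hy₀M, hy₀e⟩ := hMnot_e
    have hcc'M : cc' ∈ M := (hkey y₀ hy₀M hy₀e) ▸ hy₀M
    refine ⟨?_, M, hM, hMsub, hcc'M, hkey⟩
    obtain ⟨y, hyM, hyx, hnxy⟩ := nonadj_of_not_mem hM hxM
    by_cases hye : y ∈ e
    · exact absurd (clique_adj he.1 (Finset.mem_sdiff.mp hx).1 hye (Ne.symm hyx)) hnxy
    · exact (hkey y hyM hye) ▸ hnxy
  -- main argument
  obtain ⟨a, ha⟩ := hene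
  obtain ⟨c, hcf, hce, hnac⟩ := exists_nonadj he.1 hf (Finset.mem_sdiff.mp ha).1
    (Finset.mem_sdiff.mp ha).2
  have hc : c ∈ f \ e := Finset.mem_sdiff.mpr ⟨hcf, hce⟩
  -- find the other element of f \ e
  obtain ⟨c', hc', hc'c⟩ := Finset.exists_mem_ne (s := f \ e) (by omega) c
  obtain ⟨hnac', M, hM, hMsub, hc'M, hkey⟩ := hR a c c' ha hc hc' hc'c hnac
  have hcM : c ∉ M := fun hh => ((Finset.mem_sdiff.mp (hMsub hh)).2 (by simp))
  apply hcM
  apply maxclique_insert hM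
  intro y hyM hyc
  by_cases hyf : y ∈ f
  · exact clique_adj hf.1 hcf hyf (Ne.symm hyc)
  · have hye : y ∈ e := by
      have := Finset.sdiff_subset (hMsub hyM)
      exact (Finset.mem_union.mp this).resolve_right hyf
    have hyef : y ∈ e \ f := Finset.mem_sdiff.mpr ⟨hye, hyf⟩
    by_contra hcy
    have hnyc : ¬ G.Adj y c := fun hh => hcy hh.symm
    obtain ⟨hnyc', -⟩ := hR y c c' hyef hc hc' hc'c hnyc
    have hyc' : y ≠ c' := fun hh => hyf (hh ▸ (Finset.mem_sdiff.mp hc').1)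
    exact hnyc' (clique_adj hM.1 hyM hc'M hyc')

end Part8b
section Part8c

variable {V : Type*} [Fintype V] [DecidableEq V] (G : SimpleGraph V)

/-- A pair of maximal cliques violating 1-Spernerness. -/
def BadPair (e f : Finset V) : Prop :=
  e ∈ CliqueHyp G ∧ f ∈ CliqueHyp G ∧ 2 ≤ (e \ f).card ∧ 2 ≤ (f \ e).card

variable {G}

lemma mem_of_sides {e f : Finset V} {x y : V} (hx : x ∈ e \ f) (hy : y ∈ f \ e) : x ≠ y :=
  fun hh => (Finset.mem_sdiff.mp hy).2 (hh ▸ (Finset.mem_sdiff.mp hx).1)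

lemma card_union_three {e f : Finset V} :
    (e ∪ f).card = (e ∩ f).card + (e \ f).card + (f \ e).card := by
  have h1 : (e ∩ f).card + (e \ f).card = e.card := Finset.card_inter_add_card_sdiff e f
  have h2 : (f \ e).card + e.card = (f ∪ e).card := Finset.card_sdiff_add_card f e
  rw [Finset.union_comm] at h2
  omega

lemma case_split {e f : Finset V}
    (hmin : ∀ e' f', BadPair G e' f' → (e ∪ f).card ≤ (e' ∪ f').card)
    (he : e ∈ CliqueHyp G) (hf : f ∈ CliqueHyp G)
    (h3e : 3 ≤ (e \ f).card) (h3f : 3 ≤ (f \ e).card)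
    {a c : V} (ha : a ∈ e \ f) (hc : c ∈ f \ e)
    {M : Finset V} (hM : M ∈ CliqueHyp G) (hMs : M ⊆ (e ∪ f) \ {a, c}) :
    (∃ b d, M ∩ (e \ f) = {b} ∧ M ∩ (f \ e) = {d}) ∨ ((e ∪ f) \ {a, c} ⊆ M) := by
  have haM : a ∉ M := fun hh => ((Finset.mem_sdiff.mp (hMs hh)).2 (by simp))
  have hcM : c ∉ M := fun hh => ((Finset.mem_sdiff.mp (hMs hh)).2 (by simp))
  have hMef : M ⊆ e ∪ f := hMs.trans Finset.sdiff_subset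
  have hMe_eq : M \ e = M ∩ (f \ e) := by
    ext x
    simp only [Finset.mem_sdiff, Finset.mem_inter]
    constructor
    · intro ⟨hxM, hxe⟩
      exact ⟨hxM, (Finset.mem_union.mp (hMef hxM)).resolve_left hxe, hxe⟩
    · tauto
  have hMf_eq : M \ f = M ∩ (e \ f) := by
    ext x
    simp only [Finset.mem_sdiff, Finset.mem_inter]
    constructor
    · intro ⟨hxM, hxf⟩
      exact ⟨hxM, (Finset.mem_union.mp (hMef hxM)).resolve_right hxf, hxf⟩
    · tauto
  have hne_f : (M ∩ (f \ e)).Nonempty := by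
    rcases Finset.eq_empty_or_nonempty (M ∩ (f \ e)) with hemp | hne
    · exfalso
      have hMe : M ⊆ e := by
        intro x hxM
        by_contra hxe
        have : x ∈ M ∩ (f \ e) := by
          rw [← hMe_eq]; exact Finset.mem_sdiff.mpr ⟨hxM, hxe⟩
        rw [hemp] at this
        exact absurd this (Finset.notMem_empty x)
      exact haM ((hM.2 e he.1 hMe) ▸ (Finset.mem_sdiff.mp ha).1)
    · exact hne
  have hne_e : (M ∩ (e \ f)).Nonempty := by
    rcases Finset.eq_empty_or_nonempty (M ∩ (e \ f)) with hemp | hne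
    · exfalso
      have hMf : M ⊆ f := by
        intro x hxM
        by_contra hxf
        have : x ∈ M ∩ (e \ f) := by
          rw [← hMf_eq]; exact Finset.mem_sdiff.mpr ⟨hxM, hxf⟩
        rw [hemp] at this
        exact absurd this (Finset.notMem_empty x)
      exact hcM ((hM.2 f hf.1 hMf) ▸ (Finset.mem_sdiff.mp hc).1)
    · exact hne
  have hMne : M ≠ e := fun hh => haM (hh ▸ (Finset.mem_sdiff.mp ha).1)
  -- the pair (e, M) is not bad
  have hnb_eM : (e \ M).card ≤ 1 ∨ (M \ e).card ≤ 1 := by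
    by_contra hcon
    push_neg at hcon
    have hbad : BadPair G e M := ⟨he, hM, by omega, by omega⟩
    have hle := hmin e M hbad
    have hsub : e ∪ M ⊆ (e ∪ f).erase c := by
      intro x hx
      rw [Finset.mem_erase]
      rcases Finset.mem_union.mp hx with hx' | hx'
      · exact ⟨fun hh => (Finset.mem_sdiff.mp hc).2 (hh ▸ hx'), Finset.mem_union_left f hx'⟩
      · exact ⟨fun hh => hcM (hh ▸ hx'), hMef hx'⟩
    have h1 := Finset.card_le_card hsub
    have h2 : ((e ∪ f).erase c).card < (e ∪ f).card :=
      Finset.card_erase_lt_of_mem (Finset.mem_union_right e (Finset.mem_sdiff.mp hc).1)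
    omega
  have hnb_fM : (f \ M).card ≤ 1 ∨ (M \ f).card ≤ 1 := by
    by_contra hcon
    push_neg at hcon
    have hbad : BadPair G f M := ⟨hf, hM, by omega, by omega⟩
    have hle := hmin f M hbad
    have hsub : f ∪ M ⊆ (e ∪ f).erase a := by
      intro x hx
      rw [Finset.mem_erase]
      rcases Finset.mem_union.mp hx with hx' | hx'
      · exact ⟨fun hh => (Finset.mem_sdiff.mp ha).2 (hh ▸ hx'), Finset.mem_union_right e hx'⟩
      · exact ⟨fun hh => haM (hh ▸ hx'), hMef hx'⟩
    have h1 := Finset.card_le_card hsub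
    have h2 : ((e ∪ f).erase a).card < (e ∪ f).card :=
      Finset.card_erase_lt_of_mem (Finset.mem_union_left f (Finset.mem_sdiff.mp ha).1)
    omega
  have haeM : a ∈ e \ M := Finset.mem_sdiff.mpr ⟨(Finset.mem_sdiff.mp ha).1, haM⟩
  have hcfM : c ∈ f \ M := Finset.mem_sdiff.mpr ⟨(Finset.mem_sdiff.mp hc).1, hcM⟩
  -- case analysis
  rcases hnb_eM with hEM | hEM <;> rcases hnb_fM with hFM | hFM
  · -- e \ M = {a} and f \ M = {c} : CASE IV
    have heMa : e \ M = {a} := by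
      apply Finset.eq_singleton_iff_unique_mem.mpr
      refine ⟨haeM, fun x hx => ?_⟩
      by_contra hxa
      have h2le : 2 ≤ (e \ M).card := by
        have : ({x, a} : Finset V) ⊆ e \ M := by
          intro z hz
          rcases Finset.mem_insert.mp hz with rfl | hz
          · exact hx
          · rw [Finset.mem_singleton] at hz; exact hz ▸ haeM
        have := Finset.card_le_card this
        rwa [Finset.card_pair hxa] at this
      omega
    have hfMc : f \ M = {c} := by
      apply Finset.eq_singleton_iff_unique_mem.mpr
      refine ⟨hcfM, fun x hx => ?_⟩
      by_contra hxc
      have h2le : 2 ≤ (f \ M).card := by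
        have : ({x, c} : Finset V) ⊆ f \ M := by
          intro z hz
          rcases Finset.mem_insert.mp hz with rfl | hz
          · exact hx
          · rw [Finset.mem_singleton] at hz; exact hz ▸ hcfM
        have := Finset.card_le_card this
        rwa [Finset.card_pair hxc] at this
      omega
    right
    intro x hx
    obtain ⟨hxef, hxac⟩ := Finset.mem_sdiff.mp hx
    rcases Finset.mem_union.mp hxef with hxe | hxf
    · by_contra hxM
      have : x ∈ e \ M := Finset.mem_sdiff.mpr ⟨hxe, hxM⟩
      rw [heMa, Finset.mem_singleton] at this
      exact hxac (by simp [this])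
    · by_contra hxM
      have : x ∈ f \ M := Finset.mem_sdiff.mpr ⟨hxf, hxM⟩
      rw [hfMc, Finset.mem_singleton] at this
      exact hxac (by simp [this])
  · -- e \ M = {a} and |M ∩ (e \ f)| = 1 : contradiction with 3 ≤ |e \ f|
    exfalso
    rw [hMf_eq] at hFM
    obtain ⟨b, hb⟩ := Finset.card_eq_one.mp (le_antisymm hFM (Finset.card_pos.mpr hne_e))
    have hsub : e \ f ⊆ {a, b} := by
      intro x hx
      by_cases hxM : x ∈ M
      · have : x ∈ M ∩ (e \ f) := Finset.mem_inter.mpr ⟨hxM, hx⟩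
        rw [hb, Finset.mem_singleton] at this
        simp [this]
      · have : x ∈ e \ M := Finset.mem_sdiff.mpr ⟨(Finset.mem_sdiff.mp hx).1, hxM⟩
        have hxa : x = a := by
          by_contra hxa
          have h2le : 2 ≤ (e \ M).card := by
            have hs : ({x, a} : Finset V) ⊆ e \ M := by
              intro z hz
              rcases Finset.mem_insert.mp hz with rfl | hz
              · exact this
              · rw [Finset.mem_singleton] at hz; exact hz ▸ haeM
            have := Finset.card_le_card hs
            rwa [Finset.card_pair hxa] at this
          omega
        simp [hxa]
    have := Finset.card_le_card hsub
    have hle2 : ({a, b} : Finset V).card ≤ 2 := Finset.card_insert_le _ _ |>.trans (by simp)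
    omega
  · -- |M ∩ (f \ e)| = 1 and f \ M = {c} : contradiction with 3 ≤ |f \ e|
    exfalso
    rw [hMe_eq] at hEM
    obtain ⟨d, hd⟩ := Finset.card_eq_one.mp (le_antisymm hEM (Finset.card_pos.mpr hne_f))
    have hsub : f \ e ⊆ {c, d} := by
      intro x hx
      by_cases hxM : x ∈ M
      · have : x ∈ M ∩ (f \ e) := Finset.mem_inter.mpr ⟨hxM, hx⟩
        rw [hd, Finset.mem_singleton] at this
        simp [this]
      · have : x ∈ f \ M := Finset.mem_sdiff.mpr ⟨(Finset.mem_sdiff.mp hx).1, hxM⟩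
        have hxc : x = c := by
          by_contra hxc
          have h2le : 2 ≤ (f \ M).card := by
            have hs : ({x, c} : Finset V) ⊆ f \ M := by
              intro z hz
              rcases Finset.mem_insert.mp hz with rfl | hz
              · exact this
              · rw [Finset.mem_singleton] at hz; exact hz ▸ hcfM
            have := Finset.card_le_card hs
            rwa [Finset.card_pair hxc] at this
          omega
        simp [hxc]
    have := Finset.card_le_card hsub
    have hle2 : ({c, d} : Finset V).card ≤ 2 := Finset.card_insert_le _ _ |>.trans (by simp)
    omega
  · -- both intersections singletons : CASE I
    left
    rw [hMe_eq] at hEM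
    rw [hMf_eq] at hFM
    obtain ⟨b, hbb⟩ := Finset.card_eq_one.mp (le_antisymm hFM (Finset.card_pos.mpr hne_e))
    obtain ⟨d, hdd⟩ := Finset.card_eq_one.mp (le_antisymm hEM (Finset.card_pos.mpr hne_f))
    exact ⟨b, d, hbb, hdd⟩

lemma caseI_facts {e f : Finset V} (he : e ∈ CliqueHyp G) (hf : f ∈ CliqueHyp G)
    {M : Finset V} (hM : M ∈ CliqueHyp G) (hMef : M ⊆ e ∪ f)
    {b d : V} (hb : M ∩ (e \ f) = {b}) (hd : M ∩ (f \ e) = {d}) :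
    b ∈ M ∧ d ∈ M ∧ b ∈ e \ f ∧ d ∈ f \ e ∧ G.Adj b d ∧
      (∀ x ∈ e \ f, x ≠ b → ¬ G.Adj x d) ∧ (∀ y ∈ f \ e, y ≠ d → ¬ G.Adj y b) := by
  have hbmem : b ∈ M ∩ (e \ f) := hb ▸ Finset.mem_singleton_self b
  have hdmem : d ∈ M ∩ (f \ e) := hd ▸ Finset.mem_singleton_self d
  obtain ⟨hbM, hbef⟩ := Finset.mem_inter.mp hbmem
  obtain ⟨hdM, hdfe⟩ := Finset.mem_inter.mp hdmem
  have hbd : G.Adj b d := clique_adj hM.1 hbM hdM (mem_of_sides hbef hdfe)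
  refine ⟨hbM, hdM, hbef, hdfe, hbd, ?_, ?_⟩
  · intro x hx hxb
    have hxM : x ∉ M := by
      intro hxM
      have : x ∈ M ∩ (e \ f) := Finset.mem_inter.mpr ⟨hxM, hx⟩
      rw [hb, Finset.mem_singleton] at this
      exact hxb this
    obtain ⟨y, hyM, hyx, hnxy⟩ := nonadj_of_not_mem hM hxM
    by_cases hye : y ∈ e
    · exact absurd (clique_adj he.1 (Finset.mem_sdiff.mp hx).1 hye (Ne.symm hyx)) hnxy
    · have hyfe : y ∈ f \ e :=
        Finset.mem_sdiff.mpr ⟨(Finset.mem_union.mp (hMef hyM)).resolve_left hye, hye⟩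
      have : y ∈ M ∩ (f \ e) := Finset.mem_inter.mpr ⟨hyM, hyfe⟩
      rw [hd, Finset.mem_singleton] at this
      exact this ▸ hnxy
  · intro y hy hyd
    have hyM : y ∉ M := by
      intro hyM
      have : y ∈ M ∩ (f \ e) := Finset.mem_inter.mpr ⟨hyM, hy⟩
      rw [hd, Finset.mem_singleton] at this
      exact hyd this
    obtain ⟨z, hzM, hzy, hnyz⟩ := nonadj_of_not_mem hM hyM
    by_cases hzf : z ∈ f
    · exact absurd (clique_adj hf.1 (Finset.mem_sdiff.mp hy).1 hzf (Ne.symm hzy)) hnyz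
    · have hzef : z ∈ e \ f :=
        Finset.mem_sdiff.mpr ⟨(Finset.mem_union.mp (hMef hzM)).resolve_right hzf, hzf⟩
      have : z ∈ M ∩ (e \ f) := Finset.mem_inter.mpr ⟨hzM, hzef⟩
      rw [hb, Finset.mem_singleton] at this
      exact this ▸ hnyz

end Part8c
section Part8d

variable {V : Type*} [Fintype V] [DecidableEq V] {G : SimpleGraph V}

theorem noAC4_of_twoAsummable (h2 : TwoAsummable (CliqueHyp G)) : NoAC4 G := by
  rintro ⟨a, b, c, d, hac, hbd, hab, hcd, hnac, hnbd⟩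
  -- a bad pair exists
  obtain ⟨e₀, he₀, habe⟩ := exists_maxclique (pair_isClique hab)
  obtain ⟨f₀, hf₀, hcdf⟩ := exists_maxclique (pair_isClique hcd)
  have hbad₀ : BadPair G e₀ f₀ := by
    have hae : a ∈ e₀ := habe (by simp)
    have hbe : b ∈ e₀ := habe (by simp)
    have hcf : c ∈ f₀ := hcdf (by simp)
    have hdf : d ∈ f₀ := hcdf (by simp)
    have haf : a ∉ f₀ := fun hh => hnac (clique_adj hf₀.1 hh hcf hac)
    have hbf : b ∉ f₀ := fun hh => hnbd (clique_adj hf₀.1 hh hdf hbd)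
    have hce : c ∉ e₀ := fun hh => hnac (clique_adj he₀.1 hae hh hac)
    have hde : d ∉ e₀ := fun hh => hnbd (clique_adj he₀.1 hbe hh hbd)
    refine ⟨he₀, hf₀, ?_, ?_⟩
    · have hsub : ({a, b} : Finset V) ⊆ e₀ \ f₀ := by
        intro x hx
        rcases Finset.mem_insert.mp hx with rfl | hx
        · exact Finset.mem_sdiff.mpr ⟨hae, haf⟩
        · rw [Finset.mem_singleton] at hx
          exact hx ▸ Finset.mem_sdiff.mpr ⟨hbe, hbf⟩
      have := Finset.card_le_card hsub
      rwa [Finset.card_pair hab.ne] at this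
    · have hsub : ({c, d} : Finset V) ⊆ f₀ \ e₀ := by
        intro x hx
        rcases Finset.mem_insert.mp hx with rfl | hx
        · exact Finset.mem_sdiff.mpr ⟨hcf, hce⟩
        · rw [Finset.mem_singleton] at hx
          exact hx ▸ Finset.mem_sdiff.mpr ⟨hdf, hde⟩
      have := Finset.card_le_card hsub
      rwa [Finset.card_pair hcd.ne] at this
  -- take a bad pair with minimal union cardinality
  set S : Set ℕ := {n | ∃ e f, BadPair G e f ∧ (e ∪ f).card = n} with hS
  have hSne : S.Nonempty := ⟨(e₀ ∪ f₀).card, e₀, f₀, hbad₀, rfl⟩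
  obtain ⟨e, f, hbad, hcardeq⟩ := Nat.sInf_mem hSne
  have hmin : ∀ e' f', BadPair G e' f' → (e ∪ f).card ≤ (e' ∪ f').card := by
    intro e' f' hb'
    rw [hcardeq]
    exact Nat.sInf_le ⟨e', f', hb', rfl⟩
  obtain ⟨heE, hfE, h2e, h2f⟩ := hbad
  -- either some candidate works (contradiction with 2-asummability), or all fail
  by_cases hW : ∃ a' c', a' ∈ e \ f ∧ c' ∈ f \ e ∧ ¬ G.Adj a' c' ∧
      ¬ HypDep (CliqueHyp G) ((e ∪ f) \ {a', c'})
  · obtain ⟨a', c', ha', hc', hn', hA2⟩ := hW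
    exact witness_false h2 heE hfE h2e h2f ha' hc' hn' hA2
  · have HFAIL : ∀ a' c', a' ∈ e \ f → c' ∈ f \ e → ¬ G.Adj a' c' →
        HypDep (CliqueHyp G) ((e ∪ f) \ {a', c'}) := by
      intro a' c' ha' hc' hn'
      by_contra hdep
      exact hW ⟨a', c', ha', hc', hn', hdep⟩
    clear hW
    -- dispatch on small cases
    by_cases hsf : (f \ e).card = 2
    · exact L2 heE hfE (Finset.card_pos.mp (by omega)) hsf HFAIL
    by_cases hse : (e \ f).card = 2
    · apply L2 hfE heE (Finset.card_pos.mp (by omega)) hse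
      intro a' c' ha' hc' hn'
      have := HFAIL c' a' hc' ha' (fun hh => hn' hh.symm)
      rwa [Finset.union_comm, Finset.pair_comm] at this
    have h3e : 3 ≤ (e \ f).card := by omega
    have h3f : 3 ≤ (f \ e).card := by omega
    by_cases hiso : ∃ b₁ d₁ M₁, M₁ ∈ CliqueHyp G ∧ M₁ ⊆ e ∪ f ∧
        M₁ ∩ (e \ f) = {b₁} ∧ M₁ ∩ (f \ e) = {d₁}
    · -- subcase A : an isolated cross edge exists
      obtain ⟨b₁, d₁, M₁, hM₁, hM₁ef, hM₁b, hM₁d⟩ := hiso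
      obtain ⟨hb₁M, hd₁M, hb₁ef, hd₁fe, hadj₁, hNd₁, hNb₁⟩ :=
        caseI_facts heE hfE hM₁ hM₁ef hM₁b hM₁d
      obtain ⟨y₂, hy₂, hy₂d⟩ := Finset.exists_mem_ne (s := f \ e) (by omega) d₁
      have hcand : ¬ G.Adj b₁ y₂ := fun hh => hNb₁ y₂ hy₂ hy₂d hh.symm
      obtain ⟨M₂, hM₂, hM₂sub⟩ := HFAIL b₁ y₂ hb₁ef hy₂ hcand
      rcases case_split hmin heE hfE h3e h3f hb₁ef hy₂ hM₂ hM₂sub with hI | hIV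
      · -- CASE I for the second candidate : two isolated edges, smaller bad pair
        obtain ⟨b₂, d₂, hM₂b, hM₂d⟩ := hI
        obtain ⟨hb₂M, hd₂M, hb₂ef, hd₂fe, hadj₂, hNd₂, hNb₂⟩ :=
          caseI_facts heE hfE hM₂ (hM₂sub.trans Finset.sdiff_subset) hM₂b hM₂d
        have hb₂b₁ : b₂ ≠ b₁ := fun hh =>
          (Finset.mem_sdiff.mp (hM₂sub hb₂M)).2 (by simp [hh])
        have hd₂d₁ : d₂ ≠ d₁ := by
          intro hh
          exact hNd₁ b₂ hb₂ef hb₂b₁ (hh ▸ hadj₂)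
        have hbadM : BadPair G M₁ M₂ := by
          refine ⟨hM₁, hM₂, ?_, ?_⟩
          · have hsub : ({b₁, d₁} : Finset V) ⊆ M₁ \ M₂ := by
              intro z hz
              rcases Finset.mem_insert.mp hz with rfl | hz
              · refine Finset.mem_sdiff.mpr ⟨hb₁M, fun hzz => ?_⟩
                exact (Finset.mem_sdiff.mp (hM₂sub hzz)).2 (by simp)
              · rw [Finset.mem_singleton] at hz
                subst hz
                refine Finset.mem_sdiff.mpr ⟨hd₁M, fun hzz => ?_⟩
                have : z ∈ M₂ ∩ (f \ e) := Finset.mem_inter.mpr ⟨hzz, hd₁fe⟩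
                rw [hM₂d, Finset.mem_singleton] at this
                exact hd₂d₁ this.symm
            have := Finset.card_le_card hsub
            rwa [Finset.card_pair (mem_of_sides hb₁ef hd₁fe)] at this
          · have hsub : ({b₂, d₂} : Finset V) ⊆ M₂ \ M₁ := by
              intro z hz
              rcases Finset.mem_insert.mp hz with rfl | hz
              · refine Finset.mem_sdiff.mpr ⟨hb₂M, fun hzz => ?_⟩
                have : z ∈ M₁ ∩ (e \ f) := Finset.mem_inter.mpr ⟨hzz, hb₂ef⟩
                rw [hM₁b, Finset.mem_singleton] at this
                exact hb₂b₁ this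
              · rw [Finset.mem_singleton] at hz
                subst hz
                refine Finset.mem_sdiff.mpr ⟨hd₂M, fun hzz => ?_⟩
                have : z ∈ M₁ ∩ (f \ e) := Finset.mem_inter.mpr ⟨hzz, hd₂fe⟩
                rw [hM₁d, Finset.mem_singleton] at this
                exact hd₂d₁ this
            have := Finset.card_le_card hsub
            rwa [Finset.card_pair (mem_of_sides hb₂ef hd₂fe)] at this
        have hle := hmin M₁ M₂ hbadM
        have hsubU : M₁ ∪ M₂ ⊆ (e ∩ f) ∪ {b₁, d₁, b₂, d₂} := by
          intro x hx
          have hxef : x ∈ e ∪ f := by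
            rcases Finset.mem_union.mp hx with hx' | hx'
            · exact hM₁ef hx'
            · exact (hM₂sub.trans Finset.sdiff_subset) hx'
          by_cases hxe : x ∈ e <;> by_cases hxf : x ∈ f
          · exact Finset.mem_union_left _ (Finset.mem_inter.mpr ⟨hxe, hxf⟩)
          · -- x ∈ e \ f
            apply Finset.mem_union_right
            rcases Finset.mem_union.mp hx with hx' | hx'
            · have : x ∈ M₁ ∩ (e \ f) := Finset.mem_inter.mpr ⟨hx', Finset.mem_sdiff.mpr ⟨hxe, hxf⟩⟩
              rw [hM₁b, Finset.mem_singleton] at this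
              simp [this]
            · have : x ∈ M₂ ∩ (e \ f) := Finset.mem_inter.mpr ⟨hx', Finset.mem_sdiff.mpr ⟨hxe, hxf⟩⟩
              rw [hM₂b, Finset.mem_singleton] at this
              simp [this]
          · -- x ∈ f \ e
            apply Finset.mem_union_right
            rcases Finset.mem_union.mp hx with hx' | hx'
            · have : x ∈ M₁ ∩ (f \ e) := Finset.mem_inter.mpr ⟨hx', Finset.mem_sdiff.mpr ⟨hxf, hxe⟩⟩
              rw [hM₁d, Finset.mem_singleton] at this
              simp [this]
            · have : x ∈ M₂ ∩ (f \ e) := Finset.mem_inter.mpr ⟨hx', Finset.mem_sdiff.mpr ⟨hxf, hxe⟩⟩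
              rw [hM₂d, Finset.mem_singleton] at this
              simp [this]
          · exact absurd (Finset.mem_union.mp hxef) (by tauto)
        have hcard1 := Finset.card_le_card hsubU
        have hcard2 : ((e ∩ f) ∪ {b₁, d₁, b₂, d₂}).card ≤ (e ∩ f).card + 4 := by
          refine (Finset.card_union_le _ _).trans ?_
          have h4 : ({b₁, d₁, b₂, d₂} : Finset V).card ≤ 4 := by
            refine (Finset.card_insert_le _ _).trans ?_
            refine Nat.succ_le_succ ?_
            refine (Finset.card_insert_le _ _).trans ?_
            refine Nat.succ_le_succ ?_
            refine (Finset.card_insert_le _ _).trans ?_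
            simp
          omega
        have h3 := card_union_three (e := e) (f := f)
        omega
      · -- CASE IV for the second candidate : contradiction with isolated edge
        have hd₁M₂ : d₁ ∈ M₂ := by
          apply hIV
          rw [Finset.mem_sdiff]
          refine ⟨Finset.mem_union_right _ (Finset.mem_sdiff.mp hd₁fe).1, ?_⟩
          intro hh
          rcases Finset.mem_insert.mp hh with hh' | hh'
          · exact mem_of_sides hb₁ef hd₁fe hh'.symm
          · rw [Finset.mem_singleton] at hh'
            exact hy₂d hh'.symm
        obtain ⟨x₂, hx₂, hx₂b⟩ := Finset.exists_mem_ne (s := e \ f) (by omega) b₁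
        have hx₂M₂ : x₂ ∈ M₂ := by
          apply hIV
          rw [Finset.mem_sdiff]
          refine ⟨Finset.mem_union_left _ (Finset.mem_sdiff.mp hx₂).1, ?_⟩
          intro hh
          rcases Finset.mem_insert.mp hh with hh' | hh'
          · exact hx₂b hh'
          · rw [Finset.mem_singleton] at hh'
            exact mem_of_sides hx₂ hy₂ hh'
        exact hNd₁ x₂ hx₂ hx₂b
          (clique_adj hM₂.1 hx₂M₂ hd₁M₂ (mem_of_sides hx₂ hd₁fe))
    · -- subcase B : no isolated cross edge, so all candidates are CASE IV
      have hIVall : ∀ a' c', a' ∈ e \ f → c' ∈ f \ e → ¬ G.Adj a' c' →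
          (e ∪ f) \ {a', c'} ∈ CliqueHyp G := by
        intro a' c' ha' hc' hn'
        obtain ⟨M, hM, hMsub⟩ := HFAIL a' c' ha' hc' hn'
        rcases case_split hmin heE hfE h3e h3f ha' hc' hM hMsub with hI | hIV
        · exfalso
          obtain ⟨b', d', hMb, hMd⟩ := hI
          exact hiso ⟨b', d', M, hM, hMsub.trans Finset.sdiff_subset, hMb, hMd⟩
        · rwa [Finset.Subset.antisymm hMsub hIV] at hM
      -- pick a candidate
      obtain ⟨a₀, ha₀⟩ := Finset.card_pos.mp (show 0 < (e \ f).card by omega)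
      obtain ⟨c₀, hc₀f, hc₀e, hn₀⟩ := exists_nonadj heE.1 hfE (Finset.mem_sdiff.mp ha₀).1
        (Finset.mem_sdiff.mp ha₀).2
      have hc₀ : c₀ ∈ f \ e := Finset.mem_sdiff.mpr ⟨hc₀f, hc₀e⟩
      have hM₀ := hIVall a₀ c₀ ha₀ hc₀ hn₀
      have C1 : ∀ x y, x ∈ e \ f → x ≠ a₀ → y ∈ f \ e → y ≠ c₀ → G.Adj x y := by
        intro x y hx hxa hy hyc
        have hxm : x ∈ (e ∪ f) \ {a₀, c₀} := by
          rw [Finset.mem_sdiff]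
          refine ⟨Finset.mem_union_left _ (Finset.mem_sdiff.mp hx).1, fun hh => ?_⟩
          rcases Finset.mem_insert.mp hh with hh' | hh'
          · exact hxa hh'
          · rw [Finset.mem_singleton] at hh'
            exact mem_of_sides hx hc₀ hh'
        have hym : y ∈ (e ∪ f) \ {a₀, c₀} := by
          rw [Finset.mem_sdiff]
          refine ⟨Finset.mem_union_right _ (Finset.mem_sdiff.mp hy).1, fun hh => ?_⟩
          rcases Finset.mem_insert.mp hh with hh' | hh'
          · exact mem_of_sides ha₀ hy hh'.symm
          · rw [Finset.mem_singleton] at hh'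
            exact hyc hh'
        exact clique_adj hM₀.1 hxm hym (mem_of_sides hx hy)
      obtain ⟨x₁, hx₁, hx₁a⟩ := Finset.exists_mem_ne (s := e \ f) (by omega) a₀
      obtain ⟨y₁, hy₁f, hy₁e, hn₁'⟩ := exists_nonadj heE.1 hfE (Finset.mem_sdiff.mp hx₁).1
        (Finset.mem_sdiff.mp hx₁).2
      have hy₁c₀ : y₁ = c₀ := by
        by_contra hne
        exact hn₁' (C1 x₁ y₁ hx₁ hx₁a (Finset.mem_sdiff.mpr ⟨hy₁f, hy₁e⟩) hne)
      have hn₁ : ¬ G.Adj x₁ c₀ := hy₁c₀ ▸ hn₁'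
      obtain ⟨y₂, hy₂, hy₂c⟩ := Finset.exists_mem_ne (s := f \ e) (by omega) c₀
      obtain ⟨x₂, hx₂e, hx₂f, hn₂'⟩ := exists_nonadj hfE.1 heE (Finset.mem_sdiff.mp hy₂).1
        (Finset.mem_sdiff.mp hy₂).2
      have hx₂a₀ : x₂ = a₀ := by
        by_contra hne
        exact hn₂' (C1 x₂ y₂ (Finset.mem_sdiff.mpr ⟨hx₂e, hx₂f⟩) hne hy₂ hy₂c).symm
      have hn₂ : ¬ G.Adj y₂ a₀ := hx₂a₀ ▸ hn₂'
      have hM₁ := hIVall x₁ c₀ hx₁ hc₀ hn₁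
      have ha₀m : a₀ ∈ (e ∪ f) \ {x₁, c₀} := by
        rw [Finset.mem_sdiff]
        refine ⟨Finset.mem_union_left _ (Finset.mem_sdiff.mp ha₀).1, fun hh => ?_⟩
        rcases Finset.mem_insert.mp hh with hh' | hh'
        · exact hx₁a hh'.symm
        · rw [Finset.mem_singleton] at hh'
          exact mem_of_sides ha₀ hc₀ hh'
      have hy₂m : y₂ ∈ (e ∪ f) \ {x₁, c₀} := by
        rw [Finset.mem_sdiff]
        refine ⟨Finset.mem_union_right _ (Finset.mem_sdiff.mp hy₂).1, fun hh => ?_⟩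
        rcases Finset.mem_insert.mp hh with hh' | hh'
        · exact mem_of_sides hx₁ hy₂ hh'.symm
        · rw [Finset.mem_singleton] at hh'
          exact hy₂c hh'
      exact hn₂ (clique_adj hM₁.1 hy₂m ha₀m (mem_of_sides ha₀ hy₂).symm)

end Part8d
theorem stmt1 {V : Type*} [Fintype V] [DecidableEq V] (G : SimpleGraph V) :
    [ThresholdGraph G, OneSperner (CliqueHyp G), HypThreshold (CliqueHyp G),
      TwoAsummable (CliqueHyp G)].TFAE := by
  tfae_have 1 → 2 := fun h1 => oneSperner_of_noAC4 (thresholdGraph_noAC4 h1)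
  tfae_have 2 → 3 := fun h2 => hypThreshold_of_noAC4 (noAC4_of_oneSperner h2)
  tfae_have 3 → 4 := fun h3 => twoAsummable_of_hypThreshold h3
  tfae_have 4 → 1 := fun h4 => thresholdGraph_of_noAC4 (noAC4_of_twoAsummable h4)
  tfae_finish
end

section
/- Let G be a finite simple graph, let A and B be inclusion-maximal cliques of G, let a ∈ A∖B and b ∈ B∖A, and suppose a and b are adjacent in G. Then the set (A∖{a}) ∪ {b} contains no inclusion-maximal clique of G (that is, it is an independent set of the clique hypergraph C(G)). -/
open Finset

open scoped Classical

theorem stmt2 {V : Type*} [Fintype V] [DecidableEq V] (G : SimpleGraph V)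
    (A B : Finset V) (hA : A ∈ CliqueHyp G) (hB : B ∈ CliqueHyp G)
    (a b : V) (ha : a ∈ A \ B) (hb : b ∈ B \ A) (hab : G.Adj a b) :
    ¬ HypDep (CliqueHyp G) (insert b (A.erase a)) := by
  rintro ⟨C, ⟨hCcl, hCmax⟩, hCsub⟩
  simp only [mem_sdiff] at ha hb
  obtain ⟨hAcl, hAmax⟩ := hA
  by_cases hbC : b ∈ C
  · have hclique : G.IsClique (insert a (C : Set V)) := by
      apply hCcl.insert
      intro c hcC hca
      by_cases hcb : c = b
      · subst hcb; exact hab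
      · have hcA : c ∈ A.erase a := by
          have := hCsub hcC
          simp only [mem_insert] at this
          tauto
        exact hAcl ha.1 (mem_erase.mp hcA).2 hca
    have heq : insert a C = C := by
      apply hCmax (insert a C) (by simpa using hclique) (subset_insert _ _)
    have haC : a ∈ C := by rw [← heq]; exact mem_insert_self _ _
    have := hCsub haC
    simp only [mem_insert] at this
    rcases this with h | h
    · exact hb.2 (h ▸ ha.1)
    · exact (mem_erase.mp h).1 rfl
  · have hCA : C ⊆ A := by
      intro c hc
      have := hCsub hc
      simp only [mem_insert] at this
      rcases this with h | h
      · exact absurd (h ▸ hc) hbC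
      · exact (mem_erase.mp h).2
    have hAC : A = C := hCmax A hAcl hCA
    have haC : a ∈ C := hAC ▸ ha.1
    have := hCsub haC
    simp only [mem_insert] at this
    rcases this with h | h
    · exact hb.2 (h ▸ ha.1)
    · exact (mem_erase.mp h).1 rfl
end

section
/- Let G be a finite simple graph whose clique hypergraph C(G) is 2-asummable, let A and B be inclusion-maximal cliques of G, and let a ∈ A∖B and b ∈ B∖A. Then a and b are not adjacent in G. -/
open Finset

open scoped Classical

lemma indep_aux {V : Type*} [DecidableEq V] (G : SimpleGraph V) (A : Finset V)
    (hA : A ∈ CliqueHyp G) (a b : V) (haA : a ∈ A) (hbA : b ∉ A)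
    (hadj : G.Adj a b) : ¬ HypDep (CliqueHyp G) (insert b (A.erase a)) := by
  rintro ⟨C, ⟨hCcl, hCmax⟩, hCsub⟩
  have hab : a ≠ b := fun h => hbA (h ▸ haA)
  have haC : a ∉ C := by
    intro h
    rcases Finset.mem_insert.mp (hCsub h) with h' | h'
    · exact hab h'
    · exact (Finset.mem_erase.mp h').1 rfl
  by_cases hbC : b ∈ C
  · have hclique : G.IsClique ((insert a C : Finset V) : Set V) := by
      intro u hu v hv huv
      simp only [Finset.coe_insert, Set.mem_insert_iff, Finset.mem_coe] at hu hv
      rcases hu with rfl | hu <;> rcases hv with rfl | hv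
      · exact absurd rfl huv
      · rcases Finset.mem_insert.mp (hCsub hv) with rfl | hv'
        · exact hadj
        · exact hA.1 haA (Finset.mem_erase.mp hv').2 huv
      · rcases Finset.mem_insert.mp (hCsub hu) with rfl | hu'
        · exact hadj.symm
        · exact hA.1 (Finset.mem_erase.mp hu').2 haA huv
      · exact hCcl hu hv huv
    have := hCmax (insert a C) hclique (Finset.subset_insert _ _)
    exact haC (this ▸ Finset.mem_insert_self a C)
  · have hCA : C ⊆ A := fun x hx => by
      rcases Finset.mem_insert.mp (hCsub hx) with rfl | h
      · exact absurd hx hbC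
      · exact (Finset.mem_erase.mp h).2
    have := hCmax A hA.1 hCA
    exact haC (this ▸ haA)

theorem stmt3 {V : Type*} [Fintype V] [DecidableEq V] (G : SimpleGraph V)
    (h2as : TwoAsummable (CliqueHyp G))
    (A B : Finset V) (hA : A ∈ CliqueHyp G) (hB : B ∈ CliqueHyp G)
    (a b : V) (ha : a ∈ A \ B) (hb : b ∈ B \ A) :
    ¬ G.Adj a b := by
  intro hadj
  obtain ⟨haA, haB⟩ := Finset.mem_sdiff.mp ha
  obtain ⟨hbB, hbA⟩ := Finset.mem_sdiff.mp hb
  have hab : a ≠ b := fun h => hbA (h ▸ haA)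
  apply h2as
  refine ⟨insert b (A.erase a), insert a (B.erase b), A, B,
    indep_aux G A hA a b haA hbA hadj,
    indep_aux G B hB b a hbB haB hadj.symm,
    ⟨A, hA, subset_rfl⟩, ⟨B, hB, subset_rfl⟩, ?_⟩
  intro v
  simp only [chiVec, Finset.mem_insert, Finset.mem_erase]
  by_cases h1 : v ∈ A <;> by_cases h2 : v ∈ B <;>
    by_cases h3 : v = a <;> by_cases h4 : v = b <;> simp_all
end

section
/- Let G be a finite simple graph whose clique hypergraph C(G) is 2-asummable, let A and B be inclusion-maximal cliques of G, and let a ∈ A∖B and b ∈ B∖A. Then the set (A ∪ B)∖{a, b} contains no inclusion-maximal clique of G (that is, it is an independent set of the clique hypergraph C(G)). -/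
open Finset

open scoped Classical

/-- Auxiliary: if `A` is a maximal clique, `u ∈ A`, `v ∉ A`, and `u` is adjacent to `v`,
then `(A \ {u}) ∪ {v}` contains no maximal clique. -/
lemma aux_indep_swap {V : Type*} [DecidableEq V] (G : SimpleGraph V) {A : Finset V}
    (hA : A ∈ CliqueHyp G) {u v : V} (hu : u ∈ A) (hv : v ∉ A) (hadj : G.Adj u v) :
    ¬ HypDep (CliqueHyp G) ((A.erase u) ∪ {v}) := by
  rintro ⟨g, hg, hgsub⟩
  have hune : u ≠ v := fun h => hv (h ▸ hu)
  by_cases hvg : v ∈ g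
  · set K : Finset V := A.filter (fun x => G.Adj v x) ∪ {v} with hK
    have hKclique : G.IsClique (K : Set V) := by
      intro x hx y hy hxy
      simp only [hK, coe_union, coe_filter, coe_singleton, Set.mem_union, Set.mem_setOf_eq,
        Set.mem_singleton_iff] at hx hy
      rcases hx with ⟨hxA, hxadj⟩ | rfl
      · rcases hy with ⟨hyA, hyadj⟩ | rfl
        · exact hA.1 (Finset.mem_coe.mpr hxA) (Finset.mem_coe.mpr hyA) hxy
        · exact hxadj.symm
      · rcases hy with ⟨hyA, hyadj⟩ | rfl
        · exact hyadj
        · exact absurd rfl hxy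
    have hgK : g ⊆ K := by
      intro x hxg
      rcases Finset.mem_union.mp (hgsub hxg) with hx | hx
      · have hxA : x ∈ A := Finset.mem_of_mem_erase hx
        have hxv : x ≠ v := fun h => hv (h ▸ hxA)
        have hvx : G.Adj v x :=
          hg.1 (Finset.mem_coe.mpr hvg) (Finset.mem_coe.mpr hxg) (Ne.symm hxv)
        exact Finset.mem_union.mpr (Or.inl (Finset.mem_filter.mpr ⟨hxA, hvx⟩))
      · exact Finset.mem_union.mpr (Or.inr hx)
    have hKg : K = g := hg.2 K hKclique hgK
    have huK : u ∈ K := Finset.mem_union.mpr (Or.inl (Finset.mem_filter.mpr ⟨hu, hadj.symm⟩))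
    have hug : u ∈ g := hKg ▸ huK
    rcases Finset.mem_union.mp (hgsub hug) with h | h
    · exact (Finset.notMem_erase u A) h
    · exact hune (Finset.mem_singleton.mp h)
  · have hgA : g ⊆ A := by
      intro x hxg
      rcases Finset.mem_union.mp (hgsub hxg) with hx | hx
      · exact Finset.mem_of_mem_erase hx
      · exact absurd ((Finset.mem_singleton.mp hx) ▸ hxg) hvg
    have hAg : A = g := hg.2 A hA.1 hgA
    have hug : u ∈ g := hAg ▸ hu
    rcases Finset.mem_union.mp (hgsub hug) with h | h
    · exact (Finset.notMem_erase u A) h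
    · exact hune (Finset.mem_singleton.mp h)

theorem stmt4 {V : Type*} [Fintype V] [DecidableEq V] (G : SimpleGraph V)
    (h2as : TwoAsummable (CliqueHyp G))
    (A B : Finset V) (hA : A ∈ CliqueHyp G) (hB : B ∈ CliqueHyp G)
    (a b : V) (ha : a ∈ A \ B) (hb : b ∈ B \ A) :
    ¬ HypDep (CliqueHyp G) ((A ∪ B) \ {a, b}) := by
  rintro ⟨C, hC, hCsub⟩
  have haA : a ∈ A := (Finset.mem_sdiff.mp ha).1
  have haB : a ∉ B := (Finset.mem_sdiff.mp ha).2
  have hbB : b ∈ B := (Finset.mem_sdiff.mp hb).1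
  have hbA : b ∉ A := (Finset.mem_sdiff.mp hb).2
  have hCnB : ¬ C ⊆ B := by
    intro h
    have hBC : B = C := hC.2 B hB.1 h
    have hbC : b ∈ C := hBC ▸ hbB
    exact (Finset.mem_sdiff.mp (hCsub hbC)).2 (by simp)
  have hCnA : ¬ C ⊆ A := by
    intro h
    have hAC : A = C := hC.2 A hA.1 h
    have haC : a ∈ C := hAC ▸ haA
    exact (Finset.mem_sdiff.mp (hCsub haC)).2 (by simp)
  obtain ⟨u, huC, huB⟩ := Finset.not_subset.mp hCnB
  obtain ⟨v, hvC, hvA⟩ := Finset.not_subset.mp hCnA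
  have huA : u ∈ A := by
    rcases Finset.mem_union.mp (Finset.mem_sdiff.mp (hCsub huC)).1 with h | h
    · exact h
    · exact absurd h huB
  have hvB : v ∈ B := by
    rcases Finset.mem_union.mp (Finset.mem_sdiff.mp (hCsub hvC)).1 with h | h
    · exact absurd h hvA
    · exact h
  have hune : u ≠ v := fun h => huB (h ▸ hvB)
  have hadj : G.Adj u v := hC.1 (Finset.mem_coe.mpr huC) (Finset.mem_coe.mpr hvC) hune
  apply h2as
  refine ⟨(A.erase u) ∪ {v}, (B.erase v) ∪ {u}, A, B, ?_, ?_,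
    ⟨A, hA, subset_rfl⟩, ⟨B, hB, subset_rfl⟩, ?_⟩
  · exact aux_indep_swap G hA huA hvA hadj
  · exact aux_indep_swap G hB hvB huB hadj.symm
  · intro w
    simp only [chiVec, Finset.mem_union, Finset.mem_erase, Finset.mem_singleton]
    by_cases h1 : w = u <;> by_cases h2 : w = v <;>
      by_cases h3 : w ∈ A <;> by_cases h4 : w ∈ B <;>
      simp_all <;> omega
end

section
/- A finite simple graph G is a threshold graph if and only if G is isomorphic to the co-occurrence graph of some 1-Sperner hypergraph. -/
open Finset

open scoped Classical

/-- Vicinal totality: the neighborhoods of any two vertices are nested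
(up to the two vertices themselves). -/
def VicTotal {V : Type*} (G : SimpleGraph V) : Prop :=
  ∀ u v : V, (∀ x, G.Adj u x → x ≠ v → G.Adj v x) ∨ (∀ x, G.Adj v x → x ≠ u → G.Adj u x)

lemma exists_iso_or_dom_s5 {V : Type*} [DecidableEq V] [Fintype V] (G : SimpleGraph V)
    (hvt : VicTotal G) (s : Finset V) (hne : s.Nonempty) :
    ∃ v₀ ∈ s, (∀ x ∈ s, ¬ G.Adj v₀ x) ∨ (∀ u ∈ s, u ≠ v₀ → G.Adj v₀ u) := by
  by_cases hiso : ∃ z ∈ s, ∀ x ∈ s, ¬ G.Adj z x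
  · obtain ⟨z, hz, hz2⟩ := hiso
    exact ⟨z, hz, Or.inl hz2⟩
  · push_neg at hiso
    set vic : V → V → Prop := fun u v => ∀ x ∈ s, G.Adj u x → x ≠ v → G.Adj v x with hvic
    have hvicl : ∀ u v : V, vic u v ∨ vic v u := by
      intro u v
      rcases hvt u v with h | h
      · exact Or.inl fun x _ hx hxv => h x hx hxv
      · exact Or.inr fun x _ hx hxv => h x hx hxv
    obtain ⟨v₀, hv₀s, hmaxf⟩ :=
      s.exists_max_image (fun v => (s.filter (fun u => vic u v)).card) hne
    have hmax : ∀ u ∈ s, vic u v₀ := by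
      intro u hu
      by_contra hneg
      have huv : u ≠ v₀ := by
        intro h; subst h
        exact hneg (fun x _ hx _ => hx)
      have h2 : vic v₀ u := (hvicl u v₀).resolve_left hneg
      have hsub : s.filter (fun x => vic x v₀) ⊆ s.filter (fun x => vic x u) := by
        intro x hx
        rw [Finset.mem_filter] at hx ⊢
        refine ⟨hx.1, ?_⟩
        intro y hy hxy hyu
        by_cases hyv : y = v₀
        · by_cases hxu : x = u
          · exact hxu ▸ hxy
          · have hux : G.Adj u x := h2 x hx.1 (hyv ▸ hxy).symm hxu
            have hvu : G.Adj v₀ u := hx.2 u hu hux.symm huv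
            rw [hyv]
            exact hvu.symm
        · have h3 : G.Adj v₀ y := hx.2 y hy hxy hyv
          exact h2 y hy h3 hyu
      have hultra : s.filter (fun x => vic x v₀) ⊂ s.filter (fun x => vic x u) := by
        refine ⟨hsub, fun hsup => ?_⟩
        have hu1 : u ∈ s.filter (fun x => vic x u) := by
          rw [Finset.mem_filter]
          exact ⟨hu, fun x _ hx hxu => hx⟩
        have := hsup hu1
        rw [Finset.mem_filter] at this
        exact hneg this.2
      have := Finset.card_lt_card hultra
      have := hmaxf u hu
      omega
    refine ⟨v₀, hv₀s, Or.inr ?_⟩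
    intro u hu hune
    obtain ⟨y, hy, hAdj⟩ := hiso u hu
    by_cases hyv : y = v₀
    · subst hyv; exact hAdj.symm
    · have h1 : G.Adj v₀ y := hmax u hu y hy hAdj hyv
      exact hmax y hy u hu hAdj.symm hune

lemma key_weights {V : Type*} [DecidableEq V] [Fintype V] (G : SimpleGraph V)
    (hvt : VicTotal G) :
    ∀ (n : ℕ) (s : Finset V), s.card ≤ n →
      ∃ (w : V → ℕ) (t : ℕ), (∀ x ∈ s, 1 ≤ w x) ∧
        ∀ X ⊆ s, ((∑ x ∈ X, w x) ≤ t ↔ ∀ u ∈ X, ∀ v ∈ X, ¬ G.Adj u v) := by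
  intro n
  induction n with
  | zero =>
    intro s hs
    have : s = ∅ := Finset.card_eq_zero.mp (Nat.le_zero.mp hs)
    subst this
    refine ⟨fun _ => 1, 0, by simp, ?_⟩
    intro X hX
    have : X = ∅ := Finset.subset_empty.mp hX
    subst this
    simp
  | succ n ih =>
    intro s hs
    rcases s.eq_empty_or_nonempty with rfl | hne
    · exact ih ∅ (by simp)
    obtain ⟨v₀, hv₀s, hcase⟩ := exists_iso_or_dom_s5 G hvt s hne
    obtain ⟨w, t, hpos, hiff⟩ := ih (s.erase v₀) (by
      have := Finset.card_erase_of_mem hv₀s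
      omega)
    have herase_sub : ∀ X : Finset V, X ⊆ s → X.erase v₀ ⊆ s.erase v₀ :=
      fun X hX => Finset.erase_subset_erase _ hX
    have hsum : ∀ (c : ℕ) (X : Finset V),
        (∑ x ∈ X, (if x = v₀ then c else 2 * w x))
          = (if v₀ ∈ X then c else 0) + 2 * ∑ x ∈ X.erase v₀, w x := by
      intro c X
      have hcongr : (∑ x ∈ X.erase v₀, (if x = v₀ then c else 2 * w x))
          = 2 * ∑ x ∈ X.erase v₀, w x := by
        rw [Finset.mul_sum]
        refine Finset.sum_congr rfl ?_
        intro x hx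
        rw [if_neg (Finset.ne_of_mem_erase hx)]
      by_cases hmem : v₀ ∈ X
      · rw [if_pos hmem, ← Finset.add_sum_erase X _ hmem, if_pos rfl, hcongr]
      · rw [if_neg hmem, ← hcongr]
        have : X.erase v₀ = X := Finset.erase_eq_of_notMem hmem
        rw [this]
        simp
    rcases hcase with hisol | hdom
    · -- isolated vertex case
      refine ⟨fun x => if x = v₀ then 1 else 2 * w x, 2 * t + 1, ?_, ?_⟩
      · intro x hx
        show (1 : ℕ) ≤ if x = v₀ then 1 else 2 * w x
        by_cases hxv : x = v₀
        · simp [hxv]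
        · rw [if_neg hxv]
          have := hpos x (Finset.mem_erase.mpr ⟨hxv, hx⟩)
          omega
      · intro X hX
        rw [hsum]
        have hindep : (∀ u ∈ X, ∀ v ∈ X, ¬ G.Adj u v)
            ↔ (∀ u ∈ X.erase v₀, ∀ v ∈ X.erase v₀, ¬ G.Adj u v) := by
          constructor
          · intro h u hu v hv
            exact h u (Finset.mem_of_mem_erase hu) v (Finset.mem_of_mem_erase hv)
          · intro h u hu v hv hadj
            by_cases huv : u = v₀
            · subst huv; exact hisol v (hX hv) hadj
            · by_cases hvv : v = v₀
              · subst hvv; exact hisol u (hX hu) hadj.symm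
              · exact h u (Finset.mem_erase.mpr ⟨huv, hu⟩) v (Finset.mem_erase.mpr ⟨hvv, hv⟩) hadj
        rw [hindep, ← hiff (X.erase v₀) (herase_sub X hX)]
        constructor
        · intro h; by_cases hm : v₀ ∈ X
          · rw [if_pos hm] at h; omega
          · rw [if_neg hm] at h; omega
        · intro h; by_cases hm : v₀ ∈ X
          · rw [if_pos hm]; omega
          · rw [if_neg hm]; omega
    · -- dominating vertex case
      refine ⟨fun x => if x = v₀ then 2 * t + 1 else 2 * w x, 2 * t + 1, ?_, ?_⟩
      · intro x hx
        show (1 : ℕ) ≤ if x = v₀ then 2 * t + 1 else 2 * w x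
        by_cases hxv : x = v₀
        · rw [if_pos hxv]; omega
        · rw [if_neg hxv]
          have := hpos x (Finset.mem_erase.mpr ⟨hxv, hx⟩)
          omega
      · intro X hX
        rw [hsum]
        by_cases hm : v₀ ∈ X
        · rw [if_pos hm]
          have hSpos : X.erase v₀ ≠ ∅ → 1 ≤ ∑ x ∈ X.erase v₀, w x := by
            intro hne'
            obtain ⟨x, hx⟩ := Finset.nonempty_iff_ne_empty.mpr hne'
            calc 1 ≤ w x := hpos x (herase_sub X hX hx)
              _ ≤ ∑ x ∈ X.erase v₀, w x := Finset.single_le_sum (fun _ _ => Nat.zero_le _) hx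
          constructor
          · intro h
            have hS0 : ∑ x ∈ X.erase v₀, w x = 0 := by omega
            have hXe : X.erase v₀ = ∅ := by
              by_contra hne'
              have := hSpos hne'
              omega
            intro u hu v hv hadj
            have hu' : u = v₀ := by
              by_contra h'
              have : u ∈ X.erase v₀ := Finset.mem_erase.mpr ⟨h', hu⟩
              rw [hXe] at this; exact absurd this (Finset.notMem_empty u)
            have hv' : v = v₀ := by
              by_contra h'
              have : v ∈ X.erase v₀ := Finset.mem_erase.mpr ⟨h', hv⟩
              rw [hXe] at this; exact absurd this (Finset.notMem_empty v)
            subst hu'; subst hv'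
            exact G.loopless.irrefl _ hadj
          · intro h
            have hXe : X.erase v₀ = ∅ := by
              by_contra hne'
              obtain ⟨x, hx⟩ := Finset.nonempty_iff_ne_empty.mpr hne'
              have hxv : x ≠ v₀ := Finset.ne_of_mem_erase hx
              have hxs : x ∈ s := hX (Finset.mem_of_mem_erase hx)
              have hadj : G.Adj v₀ x := hdom x hxs hxv
              exact h v₀ hm x (Finset.mem_of_mem_erase hx) hadj
            rw [hXe]
            simp
        · rw [if_neg hm]
          have : X.erase v₀ = X := Finset.erase_eq_of_notMem hm
          rw [this, ← hiff X (by rw [← this]; exact herase_sub X hX)]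
          omega

lemma victotal_threshold {V : Type*} [DecidableEq V] [Fintype V] (G : SimpleGraph V)
    (hvt : VicTotal G) : ThresholdGraph G := by
  obtain ⟨w, t, _, h⟩ := key_weights G hvt (Finset.univ.card) Finset.univ le_rfl
  exact ⟨w, t, fun X => h X (Finset.subset_univ X)⟩

lemma victotal_cooc {W : Type*} [DecidableEq W] (E : Set (Finset W)) (hS : OneSperner E) :
    VicTotal (coOccurrenceGraph E) := by
  intro u v
  by_contra h
  push_neg at h
  obtain ⟨⟨x, hux, hxv, hvx⟩, ⟨y, hvy, hyu, huy⟩⟩ := h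
  obtain ⟨hune_x, e, he, hue, hxe⟩ := hux
  obtain ⟨hvne_y, f, hf, hvf, hyf⟩ := hvy
  have hno_vx : ∀ g ∈ E, ¬ (v ∈ g ∧ x ∈ g) := by
    intro g hg ⟨h1, h2⟩
    exact hvx ⟨Ne.symm hxv, g, hg, h1, h2⟩
  have hno_uy : ∀ g ∈ E, ¬ (u ∈ g ∧ y ∈ g) := by
    intro g hg ⟨h1, h2⟩
    exact huy ⟨Ne.symm hyu, g, hg, h1, h2⟩
  have hxf : x ∉ f := fun hc => hno_vx f hf ⟨hvf, hc⟩
  have huf : u ∉ f := fun hc => hno_uy f hf ⟨hc, hyf⟩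
  have hye : y ∉ e := fun hc => hno_uy e he ⟨hue, hc⟩
  have hve : v ∉ e := fun hc => hno_vx e he ⟨hc, hxe⟩
  have hef : e ≠ f := fun hc => huf (hc ▸ hue)
  have hmin := hS e he f hf hef
  have h1 : 2 ≤ (e \ f).card := by
    have : ({u, x} : Finset W) ⊆ e \ f := by
      intro z hz
      rcases Finset.mem_insert.mp hz with rfl | hz
      · exact Finset.mem_sdiff.mpr ⟨hue, huf⟩
      · rw [Finset.mem_singleton.mp hz]
        exact Finset.mem_sdiff.mpr ⟨hxe, hxf⟩
    calc 2 = ({u, x} : Finset W).card := (Finset.card_pair hune_x).symm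
      _ ≤ (e \ f).card := Finset.card_le_card this
  have h2 : 2 ≤ (f \ e).card := by
    have : ({v, y} : Finset W) ⊆ f \ e := by
      intro z hz
      rcases Finset.mem_insert.mp hz with rfl | hz
      · exact Finset.mem_sdiff.mpr ⟨hvf, hve⟩
      · rw [Finset.mem_singleton.mp hz]
        exact Finset.mem_sdiff.mpr ⟨hyf, hye⟩
    calc 2 = ({v, y} : Finset W).card := (Finset.card_pair hvne_y).symm
      _ ≤ (f \ e).card := Finset.card_le_card this
  omega

lemma threshold_of_iso {V W : Type*} [Fintype V] [Fintype W] {G : SimpleGraph V}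
    {H : SimpleGraph W} (φ : G ≃g H) (h : ThresholdGraph H) : ThresholdGraph G := by
  classical
  obtain ⟨w, t, hwt⟩ := h
  refine ⟨fun x => w (φ x), t, ?_⟩
  intro X
  have hsum : (∑ x ∈ X, w (φ x)) = ∑ y ∈ X.image (fun x => φ x), w y :=
    (Finset.sum_image (fun a _ b _ hab => φ.toEquiv.injective hab)).symm
  rw [hsum, hwt (X.image (fun x => φ x))]
  constructor
  · intro h u hu v hv hadj
    have := h (φ u) (Finset.mem_image_of_mem _ hu) (φ v) (Finset.mem_image_of_mem _ hv)
    exact this (φ.map_adj_iff.mpr hadj)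
  · intro h u hu v hv hadj
    obtain ⟨a, ha, rfl⟩ := Finset.mem_image.mp hu
    obtain ⟨b, hb, rfl⟩ := Finset.mem_image.mp hv
    exact h a ha b hb (φ.map_adj_iff.mp hadj)

lemma nest_of_weights {V : Type*} [DecidableEq V] [Fintype V] {G : SimpleGraph V}
    {w : V → ℕ} {t : ℕ}
    (h : ∀ X : Finset V, (∑ x ∈ X, w x) ≤ t ↔ ∀ u ∈ X, ∀ v ∈ X, ¬ G.Adj u v)
    {u v x : V} (hw : w u ≤ w v) (hadj : G.Adj u x) (hxv : x ≠ v) : G.Adj v x := by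
  by_contra hvx
  have hindep : (∑ z ∈ ({v, x} : Finset V), w z) ≤ t := by
    rw [h]
    intro a ha b hb hab
    simp only [Finset.mem_insert, Finset.mem_singleton] at ha hb
    rcases ha with ha | ha <;> rcases hb with hb | hb <;> rw [ha, hb] at hab
    · exact G.loopless.irrefl _ hab
    · exact hvx hab
    · exact hvx hab.symm
    · exact G.loopless.irrefl _ hab
  have hdep : ¬ (∑ z ∈ ({u, x} : Finset V), w z) ≤ t := by
    rw [h]
    push_neg
    exact ⟨u, Finset.mem_insert_self _ _, x,
      Finset.mem_insert_of_mem (Finset.mem_singleton_self _), hadj⟩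
  rw [Finset.sum_pair (G.ne_of_adj hadj)] at hdep
  rw [Finset.sum_pair (Ne.symm hxv)] at hindep
  omega

lemma exists_maximal_clique {V : Type*} [DecidableEq V] [Fintype V] (G : SimpleGraph V)
    (S : Finset V) (hS : G.IsClique (S : Set V)) : ∃ T ∈ CliqueHyp G, S ⊆ T := by
  classical
  set F := Finset.univ.filter (fun T : Finset V => G.IsClique (T : Set V) ∧ S ⊆ T) with hF
  have hSF : S ∈ F := by
    rw [hF, Finset.mem_filter]
    exact ⟨Finset.mem_univ _, hS, le_refl _⟩
  obtain ⟨T, hTF, hTmax⟩ := F.exists_max_image Finset.card ⟨S, hSF⟩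
  rw [hF, Finset.mem_filter] at hTF
  refine ⟨T, ⟨hTF.2.1, ?_⟩, hTF.2.2⟩
  intro T' hT' hsub
  have hT'F : T' ∈ F := by
    rw [hF, Finset.mem_filter]
    exact ⟨Finset.mem_univ _, hT', hTF.2.2.trans hsub⟩
  exact (Finset.eq_of_subset_of_card_le hsub (hTmax T' hT'F)).symm

lemma cooc_cliquehyp {V : Type*} [DecidableEq V] [Fintype V] (G : SimpleGraph V)
    (u v : V) : G.Adj u v ↔ (coOccurrenceGraph (CliqueHyp G)).Adj u v := by
  constructor
  · intro h
    have hcl : G.IsClique (({u, v} : Finset V) : Set V) := by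
      rw [Finset.coe_insert, Finset.coe_singleton]
      exact SimpleGraph.isClique_pair.mpr (fun _ => h)
    obtain ⟨T, hT, hsub⟩ := exists_maximal_clique G {u, v} hcl
    exact ⟨G.ne_of_adj h, T, hT,
      hsub (Finset.mem_insert_self _ _),
      hsub (Finset.mem_insert_of_mem (Finset.mem_singleton_self _))⟩
  · rintro ⟨hne, e, he, hu, hv⟩
    exact he.1 hu hv hne

lemma cliquehyp_aux {V : Type*} [DecidableEq V] [Fintype V] {G : SimpleGraph V}
    {w : V → ℕ} {t : ℕ}
    (h : ∀ X : Finset V, (∑ x ∈ X, w x) ≤ t ↔ ∀ u ∈ X, ∀ v ∈ X, ¬ G.Adj u v)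
    {e f : Finset V} (he : e ∈ CliqueHyp G) (hf : f ∈ CliqueHyp G)
    (h2 : 2 ≤ (e \ f).card) {v : V} (hv : v ∈ f \ e)
    (hvmax : ∀ z ∈ (e \ f) ∪ (f \ e), w z ≤ w v) : False := by
  have hvf : v ∈ f := (Finset.mem_sdiff.mp hv).1
  have hve : v ∉ e := (Finset.mem_sdiff.mp hv).2
  have hclique : G.IsClique ((insert v e : Finset V) : Set V) := by
    rw [Finset.coe_insert]
    rw [SimpleGraph.isClique_insert]
    refine ⟨he.1, ?_⟩
    intro c hc hne
    have hce : c ∈ e := hc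
    by_cases hcf : c ∈ f
    · exact hf.1 hvf hcf hne
    · have hcef : c ∈ e \ f := Finset.mem_sdiff.mpr ⟨hce, hcf⟩
      obtain ⟨u2, hu2, hu2c⟩ := Finset.exists_mem_ne (s := e \ f) (by omega) c
      have hu2e : u2 ∈ e := (Finset.mem_sdiff.mp hu2).1
      have hadj : G.Adj u2 c := he.1 hu2e hce hu2c
      have hwle : w u2 ≤ w v := hvmax u2 (Finset.mem_union_left _ hu2)
      exact nest_of_weights h hwle hadj (fun hc' => hve (hc' ▸ hce)) |>.symm.symm
  have := he.2 (insert v e) hclique (Finset.subset_insert _ _)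
  exact hve (this ▸ Finset.mem_insert_self v e)

lemma cliquehyp_onesperner {V : Type*} [inst : DecidableEq V] [Fintype V] (G : SimpleGraph V)
    (h : ThresholdGraph G) : OneSperner (CliqueHyp G) := by
  obtain ⟨w, t, hwt⟩ := h
  intro e he f hf hef
  have hef1 : (e \ f).Nonempty := by
    rw [Finset.sdiff_nonempty]
    intro hsub
    exact hef (he.2 f hf.1 hsub).symm
  have hfe1 : (f \ e).Nonempty := by
    rw [Finset.sdiff_nonempty]
    intro hsub
    exact hef (hf.2 e he.1 hsub)
  have hc1 : 1 ≤ (e \ f).card := Finset.card_pos.mpr hef1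
  have hc2 : 1 ≤ (f \ e).card := Finset.card_pos.mpr hfe1
  by_contra hne
  have hboth : 2 ≤ (e \ f).card ∧ 2 ≤ (f \ e).card := by
    rcases Nat.lt_or_ge ((e \ f).card) 2 with h' | h'
    · exfalso; apply hne; omega
    rcases Nat.lt_or_ge ((f \ e).card) 2 with h'' | h''
    · exfalso; apply hne; omega
    exact ⟨h', h''⟩
  obtain ⟨v, hvU, hvmax⟩ := ((e \ f) ∪ (f \ e)).exists_max_image w
    ⟨hef1.choose, Finset.mem_union_left _ hef1.choose_spec⟩
  rcases Finset.mem_union.mp hvU with hv | hv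
  · exact cliquehyp_aux hwt hf he hboth.2 hv (by
      intro z hz
      exact hvmax z (by rwa [Finset.union_comm] at hz))
  · exact cliquehyp_aux hwt he hf hboth.1 hv hvmax

lemma fwd_main {V W : Type*} [DecidableEq V] [Fintype V] [instW : DecidableEq W] [Fintype W]
    (G : SimpleGraph V) (h : ThresholdGraph G) (ψ : V ≃ W) :
    ∃ E : Set (Finset W), OneSperner E ∧ Nonempty (G ≃g coOccurrenceGraph E) := by
  refine ⟨CliqueHyp (G.comap ψ.symm.toEmbedding), ?_, ?_⟩
  · exact cliquehyp_onesperner _ (threshold_of_iso (SimpleGraph.Iso.comap ψ.symm G) h)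
  · exact ⟨(SimpleGraph.Iso.comap ψ.symm G).symm.trans
      ⟨Equiv.refl W, fun {a b} => (cooc_cliquehyp (G.comap ψ.symm.toEmbedding) a b).symm⟩⟩

theorem stmt5 {V : Type*} [Fintype V] [DecidableEq V] (G : SimpleGraph V) :
    ThresholdGraph G ↔
      ∃ (W : Type*) (_ : Fintype W) (E : Set (Finset W)),
        OneSperner E ∧ Nonempty (G ≃g coOccurrenceGraph E) := by
  constructor
  · intro h
    refine ⟨ULift (Fin (Fintype.card V)), inferInstance, ?_⟩
    exact fwd_main (instW := fun a b => Classical.propDecidable (a = b)) G h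
      ((Fintype.equivFin V).trans Equiv.ulift.symm)
  · rintro ⟨W, instW, E, hS, ⟨φ⟩⟩
    haveI := instW
    exact threshold_of_iso φ (victotal_threshold _ (victotal_cooc E hS))
end

section
/- Let G be a finite simple split graph having a split partition (K, I) such that the labeled split graph (G, K, I) is clique-Sperner. Then: (i) if G has no edges, then |K| ≤ 1; (ii) if G has exactly one edge, then K = {v} for some non-isolated vertex v of G; and (iii) if G has at least two edges, then (K, I) is the unique split partition of G such that I is a maximal independent set of G. -/
open Finset

open scoped Classical

theorem stmt8 {V : Type*} [Fintype V] [DecidableEq V] (G : SimpleGraph V)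
    [DecidableRel G.Adj] (K I : Finset V)
    (hsp : IsSplitPartition G K I) (hcs : CliqueSperner G K I) :
    ((∀ u v : V, ¬ G.Adj u v) → K.card ≤ 1) ∧
    (G.edgeFinset.card = 1 → ∃ v : V, K = {v} ∧ ∃ w : V, G.Adj v w) ∧
    (2 ≤ G.edgeFinset.card →
      (∀ J : Finset V, (∀ u ∈ J, ∀ v ∈ J, ¬ G.Adj u v) → I ⊆ J → J = I) ∧
      (∀ K' I' : Finset V, IsSplitPartition G K' I' →
        (∀ J : Finset V, (∀ u ∈ J, ∀ v ∈ J, ¬ G.Adj u v) → I' ⊆ J → J = I') →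
        K' = K ∧ I' = I)) := by
  obtain ⟨hdisj, hcover, hclK, hindI⟩ := hsp
  have hmem : ∀ v : V, v ∈ K ∨ v ∈ I := by
    intro v
    have h0 := Finset.ext_iff.mp hcover v
    simp only [Finset.mem_union, Finset.mem_univ, iff_true] at h0
    exact h0
  have hnot : ∀ v : V, v ∈ K → v ∉ I := fun v hv hv' =>
    (Finset.disjoint_left.mp hdisj hv) hv'
  refine ⟨?_, ?_, ?_⟩
  · -- (i) no edges
    intro hne
    rw [Finset.card_le_one]
    intro a ha b hb
    apply hcs a ha b hb
    intro w hw
    exact absurd hw.1 (hne a w)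
  · -- (ii) one edge
    intro h1
    obtain ⟨e, he⟩ := Finset.card_eq_one.mp h1
    induction e using Sym2.ind with
    | _ a b =>
    have hab : G.Adj a b := by
      have : s(a, b) ∈ G.edgeFinset := by rw [he]; exact Finset.mem_singleton_self _
      exact SimpleGraph.mem_edgeFinset.mp this
    have hne : a ≠ b := G.ne_of_adj hab
    have honly : ∀ u w : V, G.Adj u w → s(u, w) = s(a, b) := by
      intro u w huw
      have : s(u, w) ∈ G.edgeFinset := SimpleGraph.mem_edgeFinset.mpr huw
      rw [he] at this
      exact Finset.mem_singleton.mp this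
    have hnotboth : ¬ (a ∈ K ∧ b ∈ K) := by
      rintro ⟨haK, hbK⟩
      have : a = b := by
        apply hcs a haK b hbK
        intro w hw
        have hw1 : G.Adj a w := hw.1
        have := honly a w hw1
        rw [Sym2.eq_iff] at this
        rcases this with ⟨h1', h2'⟩ | ⟨h1', h2'⟩
        · exact absurd (h2' ▸ hw.2) (hnot b hbK)
        · exact absurd h2'.symm (G.ne_of_adj hw1)
      exact hne this
    have key : ∀ c d : V, G.Adj c d → c ∈ K → d ∈ I → (K = {c} ∧ ∃ w, G.Adj c w) := by
      intro c d hcd hcK hdI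
      refine ⟨?_, d, hcd⟩
      apply Finset.eq_singleton_iff_unique_mem.mpr
      refine ⟨hcK, ?_⟩
      intro u huK
      by_contra huc
      have hadj : G.Adj u c := hclK huK hcK huc
      have := honly u c hadj
      rw [Sym2.eq_iff] at this
      have hcd' : G.Adj c d := hcd
      rcases this with ⟨h1', h2'⟩ | ⟨h1', h2'⟩
      · -- u = a, c = b : then s(a,b) edge with a=u∈K, b=c∈K
        exact hnotboth ⟨h1' ▸ huK, h2' ▸ hcK⟩
      · exact hnotboth ⟨h2' ▸ hcK, h1' ▸ huK⟩
    rcases hmem a with haK | haI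
    · rcases hmem b with hbK | hbI
      · exact absurd ⟨haK, hbK⟩ hnotboth
      · obtain ⟨h1', h2'⟩ := key a b hab haK hbI
        exact ⟨a, h1', h2'⟩
    · rcases hmem b with hbK | hbI
      · obtain ⟨h1', h2'⟩ := key b a hab.symm hbK haI
        exact ⟨b, h1', h2'⟩
      · exact absurd hab (hindI a haI b hbI)
  · -- (iii) at least two edges
    intro h2
    -- helper: if some x ∈ K has no neighbors in I, contradiction
    have hcore : ∀ x : V, x ∈ K → (∀ w : V, G.Adj x w → w ∉ I) → False := by
      intro x hxK hxI
      have hKx : K = {x} := by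
        apply Finset.eq_singleton_iff_unique_mem.mpr
        refine ⟨hxK, ?_⟩
        intro u huK
        refine (hcs x hxK u huK ?_).symm
        intro w hw
        exact absurd (Finset.mem_coe.mp hw.2) (hxI w hw.1)
      -- then G has no edges
      have : G.edgeFinset = ∅ := by
        rw [Finset.eq_empty_iff_forall_notMem]
        intro e he
        induction e using Sym2.ind with
        | _ a b =>
        have hab : G.Adj a b := SimpleGraph.mem_edgeFinset.mp he
        rcases hmem a with haK | haI
        · have ha : a = x := by rw [hKx] at haK; exact Finset.mem_singleton.mp haK
          rcases hmem b with hbK | hbI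
          · have hb : b = x := by rw [hKx] at hbK; exact Finset.mem_singleton.mp hbK
            exact G.ne_of_adj hab (ha.trans hb.symm)
          · exact hxI b (ha ▸ hab) hbI
        · rcases hmem b with hbK | hbI
          · have hb : b = x := by rw [hKx] at hbK; exact Finset.mem_singleton.mp hbK
            exact hxI a (hb ▸ hab.symm) haI
          · exact hindI a haI b hbI hab
      rw [this] at h2
      simp at h2
    have hmax : ∀ J : Finset V, (∀ u ∈ J, ∀ v ∈ J, ¬ G.Adj u v) → I ⊆ J → J = I := by
      intro J hJind hIJ
      apply Finset.Subset.antisymm _ hIJ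
      intro x hxJ
      by_contra hxI
      have hxK : x ∈ K := (hmem x).resolve_right hxI
      exact hcore x hxK (fun w hw hwI => hJind x hxJ w (hIJ hwI) hw)
    refine ⟨hmax, ?_⟩
    intro K' I' hsp' hmax'
    obtain ⟨hdisj', hcover', hclK', hindI'⟩ := hsp'
    have hmem' : ∀ v : V, v ∈ K' ∨ v ∈ I' := by
      intro v
      have h0 := Finset.ext_iff.mp hcover' v
      simp only [Finset.mem_union, Finset.mem_univ, iff_true] at h0
      exact h0
    have hnot' : ∀ v : V, v ∈ K' → v ∉ I' := fun v hv hv' =>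
      (Finset.disjoint_left.mp hdisj' hv) hv'
    have hII : I' = I → K' = K ∧ I' = I := by
      intro hI
      refine ⟨?_, hI⟩
      ext v
      constructor
      · intro hvK'
        exact (hmem v).resolve_right (hI ▸ hnot' v hvK')
      · intro hvK
        rcases hmem' v with h | h
        · exact h
        · exact absurd (hI ▸ h) (hnot v hvK)
    by_cases hKK' : K ⊆ K'
    · apply hII
      refine (hmax' I hindI ?_).symm
      intro v hvI'
      rcases hmem v with hvK | hvI
      · exact absurd hvI' (hnot' v (hKK' hvK))
      · exact hvI
    · exfalso
      obtain ⟨x, hxK, hxK'⟩ := Finset.not_subset.mp hKK'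
      have hxI' : x ∈ I' := (hmem' x).resolve_left hxK'
      apply hcore x hxK
      intro w hw hwI
      -- w ∈ I, Adj x w, so w ∉ I' (else contradicts I' independent), so w ∈ K'
      have hwI' : w ∉ I' := fun hwI' => hindI' x hxI' w hwI' hw
      have hwK' : w ∈ K' := (hmem' w).resolve_right hwI'
      -- K = {x}
      have hKx : ∀ u ∈ K, u = x := by
        intro u huK
        by_contra hux
        have huK' : u ∈ K' := by
          rcases hmem' u with h | h
          · exact h
          · exact absurd (hclK huK hxK hux) (hindI' u h x hxI')
        apply hux
        refine (hcs x hxK u huK ?_).symm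
        intro z hz
        have hzI : z ∈ I := hz.2
        have hzx : G.Adj x z := hz.1
        have hzI' : z ∉ I' := fun hzI' => hindI' x hxI' z hzI' hzx
        have hzK' : z ∈ K' := (hmem' z).resolve_right hzI'
        have huz : u ≠ z := fun h => (hnot u huK) (h ▸ hzI)
        exact ⟨hclK' huK' hzK' huz, hzI⟩
      -- now all edges have the form s(x, z) with z ∈ K' ∩ I
      have hform : ∀ e ∈ G.edgeFinset, ∃ z : V, z ∈ K' ∧ z ∈ I ∧ e = s(x, z) := by
        intro e he
        induction e using Sym2.ind with
        | _ a b =>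
        have hab : G.Adj a b := SimpleGraph.mem_edgeFinset.mp he
        rcases hmem a with haK | haI
        · have ha : a = x := hKx a haK
          rcases hmem b with hbK | hbI
          · exact absurd ((hKx a haK).trans (hKx b hbK).symm) (G.ne_of_adj hab)
          · have hbx : G.Adj x b := ha ▸ hab
            have hbI' : b ∉ I' := fun h => hindI' x hxI' b h hbx
            exact ⟨b, (hmem' b).resolve_right hbI', hbI, by rw [ha]⟩
        · rcases hmem b with hbK | hbI
          · have hb : b = x := hKx b hbK
            have hax : G.Adj x a := hb ▸ hab.symm
            have haI' : a ∉ I' := fun h => hindI' x hxI' a h hax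
            exact ⟨a, (hmem' a).resolve_right haI', haI, by rw [hb, Sym2.eq_swap]⟩
          · exact absurd hab (hindI a haI b hbI)
      have hle1 : G.edgeFinset.card ≤ 1 := by
        rw [Finset.card_le_one]
        intro e1 he1 e2 he2
        obtain ⟨z1, hz1K', hz1I, he1'⟩ := hform e1 he1
        obtain ⟨z2, hz2K', hz2I, he2'⟩ := hform e2 he2
        have : z1 = z2 := by
          by_contra hne
          exact hindI z1 hz1I z2 hz2I (hclK' hz1K' hz2K' hne)
        rw [he1', he2', this]
      omega
end

section
/- Let G be a finite simple split graph with at least two vertices that is H-free, and let (K, I) be a split partition of G such that the labeled split graph (G, K, I) is clique-Sperner. Then there exist a partition K = K¹ ∪ K² and a partition I = {z} ∪ I¹ ∪ I² (all parts pairwise disjoint, K¹, K², I¹, I² possibly empty) such that: z is adjacent to every vertex of K¹ and to no vertex of K²; every vertex of I¹ is adjacent to every vertex of K²; no vertex of I² is adjacent to any vertex of K¹; and the labeled split graphs (G[K¹ ∪ I¹], K¹, I¹) and (G[K² ∪ I²], K², I²) induced by K¹ ∪ I¹ and K² ∪ I², respectively, are H-free and clique-Sperner. -/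
open Finset

open scoped Classical

lemma exists_good_z {V : Type*} [DecidableEq V] (K I : Finset V)
    (hI : I.Nonempty) (NI : V → Finset V) (hNIsub : ∀ a ∈ K, NI a ⊆ I)
    (hspn : ∀ a ∈ K, ∀ b ∈ K, a ≠ b → (NI a \ NI b).Nonempty)
    (hmin : ∀ a ∈ K, ∀ b ∈ K, a ≠ b → (NI a \ NI b).card ≤ 1 ∨ (NI b \ NI a).card ≤ 1) :
    ∃ z ∈ I, ∀ a ∈ K, ∀ b ∈ K, z ∈ NI a → z ∉ NI b →
      ∀ x ∈ NI a, x ≠ z → x ∈ NI b := by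
  classical
  set C := I.card with hC
  obtain ⟨z, hzI, hzmin⟩ := I.exists_min_image (fun v =>
    (C+1) * K.sup (fun c => if v ∈ NI c then (NI c).card else 0)
      + K.sup (fun c => if v ∈ NI c then 0 else C - (NI c).card)) hI
  refine ⟨z, hzI, ?_⟩
  by_contra hbad
  push_neg at hbad
  obtain ⟨a, ha, b, hb, hza, hzb, x, hxa, hxz, hxb⟩ := hbad
  have harith : ∀ s t : Finset V, (s \ t).card + t.card = (t \ s).card + s.card := by
    intro s t
    have h1 := Finset.card_inter_add_card_sdiff s t
    have h2 := Finset.card_inter_add_card_sdiff t s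
    rw [Finset.inter_comm] at h2
    omega
  have hab : a ≠ b := fun h => hzb (h ▸ hza)
  -- tool: if |NI c| < |NI d| (c ≠ d) then the private part of c is a singleton
  have tool : ∀ c ∈ K, ∀ d ∈ K, c ≠ d → (NI c).card < (NI d).card →
      (NI c \ NI d).card = 1 := by
    intro c hc d hd hcd hlt
    have h1 := harith (NI c) (NI d)
    have hge1 : 1 ≤ (NI c \ NI d).card := Finset.card_pos.2 (hspn c hc d hd hcd)
    rcases hmin c hc d hd hcd with h | h <;> omega
  have hcard_a : 2 ≤ (NI a).card := Finset.one_lt_card.2 ⟨x, hxa, z, hza, hxz⟩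
  have hfe0 : (NI b).card + 1 ≤ (NI a).card := by
    have h1 := harith (NI a) (NI b)
    have h2 : 2 ≤ (NI a \ NI b).card :=
      Finset.one_lt_card.2 ⟨x, Finset.mem_sdiff.2 ⟨hxa, hxb⟩, z, Finset.mem_sdiff.2 ⟨hza, hzb⟩, hxz⟩
    have hge1 : 1 ≤ (NI b \ NI a).card := Finset.card_pos.2 (hspn b hb a ha hab.symm)
    rcases hmin a ha b hb hab with h | h <;> omega
  -- choose astar : max |NI c| among c ∈ K with z ∈ NI c
  obtain ⟨astar, hastarm, hastarmax⟩ :=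
    (K.filter (fun c => z ∈ NI c)).exists_max_image (fun c => (NI c).card)
      ⟨a, Finset.mem_filter.2 ⟨ha, hza⟩⟩
  rw [Finset.mem_filter] at hastarm
  obtain ⟨hastar, hzastar⟩ := hastarm
  have hamax : ∀ c ∈ K, z ∈ NI c → (NI c).card ≤ (NI astar).card := by
    intro c hc hzc
    exact hastarmax c (Finset.mem_filter.2 ⟨hc, hzc⟩)
  have hea : (NI a).card ≤ (NI astar).card := hamax a ha hza
  -- choose bstar : min |NI c| among c ∈ K with z ∉ NI c
  obtain ⟨bstar, hbstarm, hbstarmin⟩ :=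
    (K.filter (fun c => z ∉ NI c)).exists_min_image (fun c => (NI c).card)
      ⟨b, Finset.mem_filter.2 ⟨hb, hzb⟩⟩
  rw [Finset.mem_filter] at hbstarm
  obtain ⟨hbstar, hzbstar⟩ := hbstarm
  have hbmin : ∀ c ∈ K, z ∉ NI c → (NI bstar).card ≤ (NI c).card := by
    intro c hc hzc
    exact hbstarmin c (Finset.mem_filter.2 ⟨hc, hzc⟩)
  have hfs_le : (NI bstar).card ≤ (NI b).card := hbmin b hb hzb
  have habstar : astar ≠ bstar := fun h => hzbstar (h ▸ hzastar)
  have hfs_lt : (NI bstar).card + 1 ≤ (NI astar).card := by omega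
  -- w : the unique element of NI bstar \ NI astar
  obtain ⟨w, hwmem⟩ := hspn bstar hbstar astar hastar habstar.symm
  have hwf : w ∈ NI bstar := (Finset.mem_sdiff.1 hwmem).1
  have hwe : w ∉ NI astar := (Finset.mem_sdiff.1 hwmem).2
  have hwI : w ∈ I := hNIsub bstar hbstar hwf
  have hfes : (NI bstar \ NI astar).card = 1 :=
    tool bstar hbstar astar hastar habstar.symm (by omega)
  have hfes' : ∀ u ∈ NI bstar, u ∉ NI astar → u = w := by
    intro u hu hun
    exact Finset.card_le_one.1 (le_of_eq hfes) u (Finset.mem_sdiff.2 ⟨hu, hun⟩) w hwmem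
  -- (A): every NI c containing w has card ≤ |NI astar|
  have hA : ∀ c ∈ K, w ∈ NI c → (NI c).card ≤ (NI astar).card := by
    intro c hc hwc
    by_contra hgt
    push_neg at hgt
    have hzc : z ∉ NI c := by
      intro hzc
      have := hamax c hc hzc
      omega
    have hcastar : astar ≠ c := fun h => hzc (h ▸ hzastar)
    have hsng := tool astar hastar c hc hcastar hgt
    have hsub : NI bstar ⊆ NI c := by
      intro u hu
      by_cases hue : u ∈ NI astar
      · by_contra hunc
        have huz : u = z :=
          Finset.card_le_one.1 (le_of_eq hsng) u (Finset.mem_sdiff.2 ⟨hue, hunc⟩) z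
            (Finset.mem_sdiff.2 ⟨hzastar, hzc⟩)
        exact hzbstar (huz ▸ hu)
      · have huw := hfes' u hu hue
        rw [huw]; exact hwc
    have hbc : bstar ≠ c := by
      intro h; rw [h] at hfs_lt; omega
    obtain ⟨u, hu⟩ := hspn bstar hbstar c hc hbc
    rw [Finset.mem_sdiff] at hu
    exact hu.2 (hsub hu.1)
  -- sup facts
  have hf1z : K.sup (fun c => if z ∈ NI c then (NI c).card else 0) = (NI astar).card := by
    apply le_antisymm
    · apply Finset.sup_le
      intro c hc
      split_ifs with h
      · exact hamax c hc h
      · exact Nat.zero_le _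
    · have := Finset.le_sup (f := fun c => if z ∈ NI c then (NI c).card else 0) hastar
      simpa [hzastar] using this
  have hf1w : K.sup (fun c => if w ∈ NI c then (NI c).card else 0) ≤ (NI astar).card := by
    apply Finset.sup_le
    intro c hc
    split_ifs with h
    · exact hA c hc h
    · exact Nat.zero_le _
  have hf2w_C : K.sup (fun c => if w ∈ NI c then 0 else C - (NI c).card) ≤ C := by
    apply Finset.sup_le
    intro c hc
    split_ifs
    · exact Nat.zero_le _
    · exact Nat.sub_le _ _
  have hzw := hzmin w hwI
  have hCbound : (NI astar).card ≤ C := Finset.card_le_card (hNIsub astar hastar)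
  rcases lt_or_eq_of_le (le_trans hf1w (le_of_eq hf1z.symm)) with hlt | heq
  · -- strictly smaller max: contradiction with minimality of z
    have hmul : (C+1) * (K.sup (fun c => if w ∈ NI c then (NI c).card else 0) + 1)
        ≤ (C+1) * (K.sup (fun c => if z ∈ NI c then (NI c).card else 0)) :=
      Nat.mul_le_mul_left _ hlt
    rw [Nat.mul_add, Nat.mul_one] at hmul
    omega
  · -- equal max
    -- cstar : max edge through w, of card |NI astar|
    obtain ⟨cstar, hcstarm, hcstarmax⟩ :=
      (K.filter (fun c => w ∈ NI c)).exists_max_image (fun c => (NI c).card)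
        ⟨bstar, Finset.mem_filter.2 ⟨hbstar, hwf⟩⟩
    rw [Finset.mem_filter] at hcstarm
    obtain ⟨hcstar, hwcstar⟩ := hcstarm
    have hh_le : (NI cstar).card ≤ (NI astar).card := hA cstar hcstar hwcstar
    have hh_ge : (NI astar).card ≤ (NI cstar).card := by
      by_contra hcon
      push_neg at hcon
      have : K.sup (fun c => if w ∈ NI c then (NI c).card else 0) < (NI astar).card := by
        apply Nat.lt_of_le_of_lt _ hcon
        apply Finset.sup_le
        intro c hc
        split_ifs with h
        · exact hcstarmax c (Finset.mem_filter.2 ⟨hc, h⟩)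
        · exact Nat.zero_le _
      rw [heq, hf1z] at this
      omega
    have hh : (NI cstar).card = (NI astar).card := le_antisymm hh_le hh_ge
    -- (B): every NI c avoiding w has card ≥ |NI bstar| + 1
    have hB : ∀ c ∈ K, w ∉ NI c → (NI bstar).card + 1 ≤ (NI c).card := by
      intro c hc hwc
      by_contra hle
      push_neg at hle
      have hcbstar : c ≠ bstar := fun h => hwc (h ▸ hwf)
      obtain ⟨p, hpmem⟩ := hspn c hc bstar hbstar hcbstar
      rw [Finset.mem_sdiff] at hpmem
      obtain ⟨hpg, hpf⟩ := hpmem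
      have hgfs1 : (NI c \ NI bstar).card ≤ 1 := by
        have h1 := harith (NI c) (NI bstar)
        rcases hmin c hc bstar hbstar hcbstar with h | h <;> omega
      have hpall : ∀ u ∈ NI c, u ∉ NI bstar → u = p := fun u hu hun =>
        Finset.card_le_one.1 hgfs1 u (Finset.mem_sdiff.2 ⟨hu, hun⟩) p
          (Finset.mem_sdiff.2 ⟨hpg, hpf⟩)
      by_cases hzc : z ∈ NI c
      · have hpz : p = z := ((hpall z hzc hzbstar)).symm
        have hsub : NI c ⊆ NI astar := by
          intro u hu
          by_cases hub : u ∈ NI bstar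
          · by_contra hue
            have := hfes' u hub hue
            rw [this] at hu
            exact hwc hu
          · have := hpall u hu hub
            rw [this, hpz]
            exact hzastar
        have hcas : c ≠ astar := by
          intro h; rw [h] at hle; omega
        obtain ⟨u, hu⟩ := hspn c hc astar hastar hcas
        rw [Finset.mem_sdiff] at hu
        exact hu.2 (hsub hu.1)
      · have hgeq : (NI c).card = (NI bstar).card := by have := hbmin c hc hzc; omega
        have hfsg1 : (NI bstar \ NI c).card ≤ 1 := by
          have h1 := harith (NI c) (NI bstar)
          rcases hmin c hc bstar hbstar hcbstar with h | h <;> omega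
        have hfsgall : ∀ u ∈ NI bstar, u ∉ NI c → u = w := fun u hu hun =>
          Finset.card_le_one.1 hfsg1 u (Finset.mem_sdiff.2 ⟨hu, hun⟩) w
            (Finset.mem_sdiff.2 ⟨hwf, hwc⟩)
        by_cases hpe : p ∈ NI astar
        · have hsub : NI c ⊆ NI astar := by
            intro u hu
            by_cases hub : u ∈ NI bstar
            · by_contra hue
              have := hfes' u hub hue
              rw [this] at hu
              exact hwc hu
            · have := hpall u hu hub
              rw [this]; exact hpe
          have hcas : c ≠ astar := by
            intro h; rw [h] at hgeq; omega
          obtain ⟨u, hu⟩ := hspn c hc astar hastar hcas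
          rw [Finset.mem_sdiff] at hu
          exact hu.2 (hsub hu.1)
        · have hbstarcstar : bstar ≠ cstar := by
            intro h; rw [h] at hfs_lt; omega
          obtain ⟨q, hqmem⟩ := hspn bstar hbstar cstar hcstar hbstarcstar
          rw [Finset.mem_sdiff] at hqmem
          obtain ⟨hqf, hqh⟩ := hqmem
          have hfh1 : (NI bstar \ NI cstar).card = 1 :=
            tool bstar hbstar cstar hcstar hbstarcstar (by omega)
          have hqw : q ≠ w := fun h => hqh (h ▸ hwcstar)
          have hph : p ∈ NI cstar := by
            by_contra hph
            have hqg : q ∈ NI c := by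
              by_contra hqg
              exact hqw (hfsgall q hqf hqg)
            have hqp : q ≠ p := fun h => hpf (h ▸ hqf)
            have h2 : 2 ≤ (NI c \ NI cstar).card :=
              Finset.one_lt_card.2 ⟨q, Finset.mem_sdiff.2 ⟨hqg, hqh⟩, p,
                Finset.mem_sdiff.2 ⟨hpg, hph⟩, hqp⟩
            have hccstar : c ≠ cstar := fun h => hwc (h ▸ hwcstar)
            have := tool c hc cstar hcstar hccstar (by omega)
            omega
          have hpw : p ≠ w := fun h => hpf (h ▸ hwf)
          have h2 : 2 ≤ (NI cstar \ NI astar).card :=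
            Finset.one_lt_card.2 ⟨w, Finset.mem_sdiff.2 ⟨hwcstar, hwe⟩, p,
              Finset.mem_sdiff.2 ⟨hph, hpe⟩, hpw.symm⟩
          have hcsas : cstar ≠ astar := fun h => hpe (h ▸ hph)
          have h1 := harith (NI cstar) (NI astar)
          have hge1 : 1 ≤ (NI astar \ NI cstar).card :=
            Finset.card_pos.2 (hspn astar hastar cstar hcstar hcsas.symm)
          rcases hmin cstar hcstar astar hastar hcsas with h | h <;> omega
    -- mz comparison
    have hmzw : K.sup (fun c => if w ∈ NI c then 0 else C - (NI c).card)
        ≤ C - ((NI bstar).card + 1) := by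
      apply Finset.sup_le
      intro c hc
      split_ifs with h
      · exact Nat.zero_le _
      · exact Nat.sub_le_sub_left (hB c hc h) C
    have hmzz : C - (NI bstar).card
        ≤ K.sup (fun c => if z ∈ NI c then 0 else C - (NI c).card) := by
      have := Finset.le_sup (f := fun c => if z ∈ NI c then 0 else C - (NI c).card) hbstar
      simpa [hzbstar] using this
    have hfsC : (NI bstar).card + 1 ≤ C := le_trans hfs_lt hCbound
    rw [← heq] at hzw
    omega

set_option maxHeartbeats 1000000 in
lemma graphH_embed {V : Type*} (G : SimpleGraph V) (a b x y x' y' : V)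
    (hab : G.Adj a b) (hax : G.Adj a x) (hay : G.Adj a y)
    (hbx' : G.Adj b x') (hby' : G.Adj b y')
    (nax' : ¬ G.Adj a x') (nay' : ¬ G.Adj a y')
    (nbx : ¬ G.Adj b x) (nby : ¬ G.Adj b y)
    (nxy : ¬ G.Adj x y) (nxx' : ¬ G.Adj x x') (nxy' : ¬ G.Adj x y')
    (nyx' : ¬ G.Adj y x') (nyy' : ¬ G.Adj y y') (nx'y' : ¬ G.Adj x' y')
    (dxy : x ≠ y) (dx'y' : x' ≠ y') (dxx' : x ≠ x') (dxy' : x ≠ y')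
    (dyx' : y ≠ x') (dyy' : y ≠ y') (dax' : a ≠ x') (day' : a ≠ y')
    (dbx : b ≠ x) (dby : b ≠ y) :
    Nonempty (graphH ↪g G) := by
  have dab : a ≠ b := hab.ne
  have dax : a ≠ x := hax.ne
  have day : a ≠ y := hay.ne
  have dbx' : b ≠ x' := hbx'.ne
  have dby' : b ≠ y' := hby'.ne
  have hxa := hax.symm
  have hya := hay.symm
  have hx'b := hbx'.symm
  have hy'b := hby'.symm
  have hba := hab.symm
  have nyx : ¬ G.Adj y x := fun h => nxy h.symm
  have nx'x : ¬ G.Adj x' x := fun h => nxx' h.symm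
  have ny'x : ¬ G.Adj y' x := fun h => nxy' h.symm
  have nx'y : ¬ G.Adj x' y := fun h => nyx' h.symm
  have ny'y : ¬ G.Adj y' y := fun h => nyy' h.symm
  have ny'x' : ¬ G.Adj y' x' := fun h => nx'y' h.symm
  have nx'a : ¬ G.Adj x' a := fun h => nax' h.symm
  have ny'a : ¬ G.Adj y' a := fun h => nay' h.symm
  have nxb : ¬ G.Adj x b := fun h => nbx h.symm
  have nyb : ¬ G.Adj y b := fun h => nby h.symm
  refine ⟨⟨⟨![x, a, y, x', b, y'], ?_⟩, ?_⟩⟩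
  · intro i j hij
    fin_cases i <;> fin_cases j <;>
      first
        | rfl
        | (exfalso; first | exact dab hij | exact dax hij | exact day hij | exact dax' hij | exact day' hij | exact dbx hij | exact dby hij | exact dbx' hij | exact dby' hij | exact dxy hij | exact dxx' hij | exact dxy' hij | exact dyx' hij | exact dyy' hij | exact dx'y' hij | exact dab hij.symm | exact dax hij.symm | exact day hij.symm | exact dax' hij.symm | exact day' hij.symm | exact dbx hij.symm | exact dby hij.symm | exact dbx' hij.symm | exact dby' hij.symm | exact dxy hij.symm | exact dxx' hij.symm | exact dxy' hij.symm | exact dyx' hij.symm | exact dyy' hij.symm | exact dx'y' hij.symm)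
  · intro i j
    fin_cases i <;> fin_cases j <;>
      first
        | (refine iff_of_false ?_ (by simp only [graphH, SimpleGraph.fromRel_adj]; decide); first | exact G.irrefl | exact nxy | exact nyx | exact nxx' | exact nx'x | exact nxy' | exact ny'x | exact nyx' | exact nx'y | exact nyy' | exact ny'y | exact nx'y' | exact ny'x' | exact nax' | exact nx'a | exact nay' | exact ny'a | exact nbx | exact nxb | exact nby | exact nyb)
        | (refine iff_of_true ?_ (by simp only [graphH, SimpleGraph.fromRel_adj]; decide); first | exact hax | exact hxa | exact hay | exact hya | exact hbx' | exact hx'b | exact hby' | exact hy'b | exact hab | exact hba)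

theorem stmt9 {V : Type*} [Fintype V] [DecidableEq V] (G : SimpleGraph V)
    (hcard : 1 < Fintype.card V)
    (hHfree : ¬ Nonempty (graphH ↪g G))
    (K I : Finset V) (hsp : IsSplitPartition G K I) (hcs : CliqueSperner G K I) :
    ∃ (z : V) (K1 K2 I1 I2 : Finset V),
      z ∈ I ∧ z ∉ I1 ∧ z ∉ I2 ∧
      K1 ∪ K2 = K ∧ Disjoint K1 K2 ∧
      insert z (I1 ∪ I2) = I ∧ Disjoint I1 I2 ∧
      (∀ v ∈ K1, G.Adj z v) ∧ (∀ v ∈ K2, ¬ G.Adj z v) ∧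
      (∀ u ∈ I1, ∀ v ∈ K2, G.Adj u v) ∧
      (∀ u ∈ I2, ∀ v ∈ K1, ¬ G.Adj u v) ∧
      (¬ Nonempty (graphH ↪g G.induce ((K1 ∪ I1 : Finset V) : Set V))) ∧
      (¬ Nonempty (graphH ↪g G.induce ((K2 ∪ I2 : Finset V) : Set V))) ∧
      CliqueSperner G K1 I1 ∧ CliqueSperner G K2 I2 := by
  classical
  obtain ⟨hdisj, hcover, hclique, hindep⟩ := hsp
  set NI : V → Finset V := fun a => I.filter (fun u => G.Adj a u) with hNI
  have hNImem : ∀ a u, u ∈ NI a ↔ u ∈ I ∧ G.Adj a u := by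
    intro a u; simp [hNI]
  have hNIsub : ∀ a ∈ K, NI a ⊆ I := fun a _ => Finset.filter_subset _ _
  have hIne : I.Nonempty := by
    rcases Finset.eq_empty_or_nonempty I with hIe | h
    · exfalso
      obtain ⟨u, v, huv⟩ := Fintype.exists_pair_of_one_lt_card hcard
      have hKuniv : K = Finset.univ := by
        rw [hIe] at hcover; simpa using hcover
      refine huv (hcs u (hKuniv ▸ Finset.mem_univ u) v (hKuniv ▸ Finset.mem_univ v) ?_)
      rw [hIe]
      simp
    · exact h
  have hspn : ∀ a ∈ K, ∀ b ∈ K, a ≠ b → (NI a \ NI b).Nonempty := by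
    intro a ha b hb hab
    rw [Finset.sdiff_nonempty]
    intro hsub
    refine hab (hcs a ha b hb ?_)
    intro u hu
    obtain ⟨hadj, huI⟩ := hu
    have : u ∈ NI b := hsub ((hNImem a u).2 ⟨huI, hadj⟩)
    exact ⟨((hNImem b u).1 this).2, huI⟩
  have hmin : ∀ a ∈ K, ∀ b ∈ K, a ≠ b → (NI a \ NI b).card ≤ 1 ∨ (NI b \ NI a).card ≤ 1 := by
    intro a ha b hb hab
    by_contra hcon
    push_neg at hcon
    obtain ⟨h1, h2⟩ := hcon
    obtain ⟨x, hx, y, hy, hxy⟩ := Finset.one_lt_card.1 h1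
    obtain ⟨x', hx', y', hy', hx'y'⟩ := Finset.one_lt_card.1 h2
    rw [Finset.mem_sdiff] at hx hy hx' hy'
    obtain ⟨hxI, hax⟩ := (hNImem a x).1 hx.1
    obtain ⟨hyI, hay⟩ := (hNImem a y).1 hy.1
    obtain ⟨hx'I, hbx'⟩ := (hNImem b x').1 hx'.1
    obtain ⟨hy'I, hby'⟩ := (hNImem b y').1 hy'.1
    have hKI : ∀ c ∈ K, ∀ u ∈ I, c ≠ u := by
      intro c hc u hu h
      exact Finset.disjoint_left.1 hdisj hc (h ▸ hu)
    refine hHfree (graphH_embed G a b x y x' y'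
      (hclique (Finset.mem_coe.2 ha) (Finset.mem_coe.2 hb) hab)
      hax hay hbx' hby'
      (fun h => hx'.2 ((hNImem a x').2 ⟨hx'I, h⟩))
      (fun h => hy'.2 ((hNImem a y').2 ⟨hy'I, h⟩))
      (fun h => hx.2 ((hNImem b x).2 ⟨hxI, h⟩))
      (fun h => hy.2 ((hNImem b y).2 ⟨hyI, h⟩))
      (hindep x hxI y hyI) (hindep x hxI x' hx'I) (hindep x hxI y' hy'I)
      (hindep y hyI x' hx'I) (hindep y hyI y' hy'I) (hindep x' hx'I y' hy'I)
      hxy hx'y'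
      (fun h => hx'.2 (h ▸ hx.1)) (fun h => hy'.2 (h ▸ hx.1))
      (fun h => hx'.2 (h ▸ hy.1)) (fun h => hy'.2 (h ▸ hy.1))
      (hKI a ha x' hx'I) (hKI a ha y' hy'I) (hKI b hb x hxI) (hKI b hb y hyI))
  obtain ⟨z, hzI, hvalid⟩ := exists_good_z K I hIne NI hNIsub hspn hmin
  set K1 : Finset V := K.filter (fun v => G.Adj z v) with hK1
  set K2 : Finset V := K.filter (fun v => ¬ G.Adj z v) with hK2
  set I1 : Finset V := (I.erase z).filter (fun u => ∀ v ∈ K2, G.Adj u v) with hI1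
  set I2 : Finset V := (I.erase z).filter (fun u => ¬ ∀ v ∈ K2, G.Adj u v) with hI2
  have hK1mem : ∀ v, v ∈ K1 ↔ v ∈ K ∧ G.Adj z v := by intro v; simp [hK1]
  have hK2mem : ∀ v, v ∈ K2 ↔ v ∈ K ∧ ¬ G.Adj z v := by intro v; simp [hK2]
  have hI1mem : ∀ u, u ∈ I1 ↔ (u ∈ I ∧ u ≠ z) ∧ ∀ v ∈ K2, G.Adj u v := by
    intro u; simp [hI1, Finset.mem_erase, and_comm]
  have hI2mem : ∀ u, u ∈ I2 ↔ (u ∈ I ∧ u ≠ z) ∧ ¬ ∀ v ∈ K2, G.Adj u v := by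
    intro u; simp [hI2, Finset.mem_erase, and_comm]
  have hIun : I1 ∪ I2 = I.erase z := Finset.filter_union_filter_not_eq _ _
  -- key structural fact
  have hI2K1 : ∀ u ∈ I2, ∀ v ∈ K1, ¬ G.Adj u v := by
    intro u hu v hv hadj
    obtain ⟨⟨huI, huz⟩, hnall⟩ := (hI2mem u).1 hu
    push_neg at hnall
    obtain ⟨b, hbK2, hub⟩ := hnall
    obtain ⟨hbK, hzb⟩ := (hK2mem b).1 hbK2
    obtain ⟨hvK, hzv⟩ := (hK1mem v).1 hv
    have hzNv : z ∈ NI v := (hNImem v z).2 ⟨hzI, hzv.symm⟩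
    have hzNb : z ∉ NI b := fun h => hzb (((hNImem b z).1 h).2.symm)
    have huNv : u ∈ NI v := (hNImem v u).2 ⟨huI, hadj.symm⟩
    have := hvalid v hvK b hbK hzNv hzNb u huNv huz
    exact hub (((hNImem b u).1 this).2.symm)
  -- membership in K for K1 K2
  have hK1sub : K1 ⊆ K := Finset.filter_subset _ _
  have hK2sub : K2 ⊆ K := Finset.filter_subset _ _
  have hI1K2 : ∀ u ∈ I1, ∀ v ∈ K2, G.Adj u v := by
    intro u hu v hv
    exact ((hI1mem u).1 hu).2 v hv
  refine ⟨z, K1, K2, I1, I2, hzI, ?_, ?_, ?_, ?_, ?_, ?_, ?_, ?_, hI1K2, hI2K1, ?_, ?_, ?_, ?_⟩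
  · intro h; exact ((hI1mem z).1 h).1.2 rfl
  · intro h; exact ((hI2mem z).1 h).1.2 rfl
  · exact Finset.filter_union_filter_not_eq _ _
  · exact Finset.disjoint_filter_filter_not _ _ _
  · rw [hIun]; exact Finset.insert_erase hzI
  · exact Finset.disjoint_filter_filter_not _ _ _
  · intro v hv; exact ((hK1mem v).1 hv).2
  · intro v hv; exact ((hK2mem v).1 hv).2
  · rintro ⟨e⟩
    exact hHfree ⟨(SimpleGraph.Embedding.induce _).comp e⟩
  · rintro ⟨e⟩
    exact hHfree ⟨(SimpleGraph.Embedding.induce _).comp e⟩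
  · -- CliqueSperner G K1 I1
    intro u hu v hv hsub
    refine hcs u (hK1sub hu) v (hK1sub hv) ?_
    intro t ht
    obtain ⟨hadj, htI⟩ := ht
    rw [Finset.mem_coe] at htI
    by_cases htz : t = z
    · subst htz
      exact ⟨(((hK1mem v).1 hv).2).symm, htI⟩
    · have hte : t ∈ I1 ∪ I2 := by
        rw [hIun]; exact Finset.mem_erase.2 ⟨htz, htI⟩
      rcases Finset.mem_union.1 hte with ht1 | ht2
      · have := hsub (Set.mem_inter hadj (Finset.mem_coe.2 ht1))
        exact ⟨this.1, htI⟩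
      · exact absurd ((hadj : G.Adj u t).symm) (hI2K1 t ht2 u hu)
  · -- CliqueSperner G K2 I2
    intro u hu v hv hsub
    refine hcs u (hK2sub hu) v (hK2sub hv) ?_
    intro t ht
    obtain ⟨hadj, htI⟩ := ht
    rw [Finset.mem_coe] at htI
    have htz : t ≠ z := fun h =>
      ((hK2mem u).1 hu).2 ((h ▸ (hadj : G.Adj u t)) : G.Adj u z).symm
    have hte : t ∈ I1 ∪ I2 := by
      rw [hIun]; exact Finset.mem_erase.2 ⟨htz, htI⟩
    rcases Finset.mem_union.1 hte with ht1 | ht2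
    · exact ⟨(hI1K2 t ht1 v hv).symm, htI⟩
    · have := hsub (Set.mem_inter hadj (Finset.mem_coe.2 ht2))
      exact ⟨this.1, htI⟩
end
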